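/- arXiv:0707.1102 — 12 statements merged into one kernel-verified Lean document; each statement's English description precedes it below -/
import Mathlib

section
/- Let p > 5 be a prime, let m > n > 0 be integers, and let a be a nonzero element of the finite field F_p. If the polynomial f = x^m + a·x^n induces a bijection of F_p (i.e., f is a permutation polynomial of F_p), then gcd(m - n, p - 1) is not equal to 2 and is not equal to 4. -/
open Polynomial Finset

theorem sum_pow_eq (p : ℕ) [Fact p.Prime] (e : ℕ) (he : 0 < e) :
    ∑ x : ZMod p, x ^ e = if (p - 1) ∣ e then (-1 : ZMod p) else 0 := by
  classical
  have hcard : Fintype.card (ZMod p) = p := ZMod.card p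
  have h1 : ∑ x : ZMod p, x ^ e = ∑ x : (ZMod p)ˣ, (x : ZMod p) ^ e := by
    let φ : (ZMod p)ˣ ↪ ZMod p := ⟨fun x ↦ x, Units.val_injective⟩
    have huniv : univ.map φ = univ \ {0} := by
      ext x
      simpa only [mem_map, mem_univ, Function.Embedding.coeFn_mk, true_and, mem_sdiff,
        mem_singleton, φ] using
          (show (∃ a : (ZMod p)ˣ, (a : ZMod p) = x) ↔ ¬x = 0 from isUnit_iff_ne_zero)
    calc
      ∑ x : ZMod p, x ^ e = ∑ x ∈ univ \ {(0 : ZMod p)}, x ^ e := by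
        rw [← sum_sdiff ({0} : Finset (ZMod p)).subset_univ, sum_singleton,
          zero_pow he.ne', add_zero]
      _ = ∑ x : (ZMod p)ˣ, (x : ZMod p) ^ e := by simp [φ, ← huniv, univ.sum_map φ]
  rw [h1]
  have := FiniteField.sum_pow_units (ZMod p) e
  rwa [hcard] at this

theorem hermite (p : ℕ) [Fact p.Prime] (m n : ℕ) (hmn : n < m) (hn : 0 < n)
    (a : ZMod p)
    (hperm : Function.Bijective (fun x : ZMod p => x ^ m + a * x ^ n))
    (t : ℕ) (ht1 : 0 < t) (ht2 : t ≤ p - 2) :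
    ∑ j ∈ (Finset.range (t + 1)).filter (fun j => (p - 1) ∣ (n * t + (m - n) * j)),
      ((t.choose j : ZMod p) * a ^ (t - j)) = 0 := by
  classical
  have hp3 : 3 ≤ p := by
    have := (Fact.out : p.Prime).two_le
    rcases Nat.eq_or_lt_of_le this with h | h
    · exfalso
      -- p = 2 : then t ≤ 0 contradiction
      omega
    · omega
  -- total sum identity
  have hS : ∑ x : ZMod p, (x ^ m + a * x ^ n) ^ t = 0 := by
    have h1 : ∑ x : ZMod p, (x ^ m + a * x ^ n) ^ t = ∑ x : ZMod p, x ^ t :=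
      Function.Bijective.sum_comp hperm (fun y => y ^ t)
    rw [h1]
    have := FiniteField.sum_pow_lt_card_sub_one (ZMod p) t (by rw [ZMod.card]; omega)
    exact this
  -- expand
  have hexp : ∀ x : ZMod p, (x ^ m + a * x ^ n) ^ t
      = ∑ j ∈ Finset.range (t + 1),
          (t.choose j : ZMod p) * a ^ (t - j) * x ^ (n * t + (m - n) * j) := by
    intro x
    rw [add_pow]
    apply Finset.sum_congr rfl
    intro j hj
    have hjt : j ≤ t := by simpa [Nat.lt_succ_iff] using hj
    have hexpo : m * j + n * (t - j) = n * t + (m - n) * j := by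
      zify [hjt, hmn.le]
      ring
    rw [mul_pow, ← pow_mul, ← pow_mul, mul_comm (a ^ (t-j))]
    rw [show x ^ (m * j) * (x ^ (n * (t - j)) * a ^ (t - j)) * (t.choose j : ZMod p)
        = (t.choose j : ZMod p) * a ^ (t - j) * (x ^ (m*j) * x ^ (n * (t-j))) by ring,
      ← pow_add, hexpo]
  have hswap : ∑ x : ZMod p, (x ^ m + a * x ^ n) ^ t
      = ∑ j ∈ Finset.range (t + 1),
          (t.choose j : ZMod p) * a ^ (t - j) * (∑ x : ZMod p, x ^ (n * t + (m - n) * j)) := by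
    simp_rw [hexp]
    rw [Finset.sum_comm]
    simp [Finset.mul_sum]
  rw [hswap] at hS
  have hval : ∀ j : ℕ, (∑ x : ZMod p, x ^ (n * t + (m - n) * j))
      = if (p - 1) ∣ (n * t + (m - n) * j) then (-1 : ZMod p) else 0 := by
    intro j
    exact sum_pow_eq p _ (by positivity)
  simp_rw [hval] at hS
  rw [Finset.sum_filter]
  have hfin : (∑ j ∈ Finset.range (t+1),
      if (p - 1) ∣ (n * t + (m - n) * j) then (t.choose j : ZMod p) * a ^ (t - j) else 0)
      = -∑ j ∈ Finset.range (t+1),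
        (t.choose j : ZMod p) * a ^ (t - j) * (if (p - 1) ∣ (n * t + (m - n) * j) then (-1 : ZMod p) else 0) := by
    rw [← Finset.sum_neg_distrib]
    apply Finset.sum_congr rfl
    intro j _
    by_cases h : (p - 1) ∣ (n * t + (m - n) * j) <;> simp [h]
  rw [hfin, hS, neg_zero]

theorem exists_cz (p n D d Q : ℕ) (hdpos : 0 < d)
    (hd : D.gcd (p - 1) = d) (hpQ : p - 1 = d * Q) :
    ∃ cz : ZMod Q,
      (∀ s j : ℕ, ((p - 1) ∣ n * (d * s) + D * j ↔ (j : ZMod Q) = cz * s)) ∧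
      ((n : ZMod Q) = 0 ↔ cz = 0) := by
  classical
  have hdD : d ∣ D := hd ▸ Nat.gcd_dvd_left D (p - 1)
  obtain ⟨u, hu⟩ := hdD
  have hcop : Nat.Coprime u Q := by
    have h1 : d * Nat.gcd u Q = d := by
      rw [← Nat.gcd_mul_left, ← hu, ← hpQ, hd]
    exact Nat.eq_of_mul_eq_mul_left hdpos (by rw [h1, mul_one])
  have huinv : (u : ZMod Q) * (u : ZMod Q)⁻¹ = 1 := ZMod.coe_mul_inv_eq_one u hcop
  refine ⟨-(n : ZMod Q) * (u : ZMod Q)⁻¹, ?_, ?_⟩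
  · intro s j
    have h1 : n * (d * s) + D * j = d * (n * s + u * j) := by rw [hu]; ring
    rw [h1, hpQ, Nat.mul_dvd_mul_iff_left hdpos]
    rw [← ZMod.natCast_eq_zero_iff]
    push_cast
    constructor
    · intro h
      have h2 : (u : ZMod Q) * (j : ZMod Q) = -((n : ZMod Q) * s) := by
        linear_combination h
      calc (j : ZMod Q) = ((u : ZMod Q) * (u : ZMod Q)⁻¹) * j := by rw [huinv, one_mul]
        _ = (u : ZMod Q)⁻¹ * ((u : ZMod Q) * j) := by ring
        _ = (u : ZMod Q)⁻¹ * (-((n : ZMod Q) * s)) := by rw [h2]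
        _ = -(n : ZMod Q) * (u : ZMod Q)⁻¹ * s := by ring
    · intro h
      rw [h]
      have : (n : ZMod Q) * s + (u : ZMod Q) * (-(n : ZMod Q) * (u : ZMod Q)⁻¹ * s)
          = (n : ZMod Q) * s * (1 - (u : ZMod Q) * (u : ZMod Q)⁻¹) := by ring
      rw [this, huinv]
      ring
  · constructor
    · intro h; rw [h]; ring
    · intro h
      have h2 : -(n : ZMod Q) * ((u : ZMod Q)⁻¹ * u) = 0 := by
        rw [← mul_assoc, h, zero_mul]
      rw [mul_comm ((u : ZMod Q)⁻¹), huinv, mul_one, neg_eq_zero] at h2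
      exact h2

theorem find_singleton (p n D d Q : ℕ) (hd2 : 2 ≤ d)
    (hd : D.gcd (p - 1) = d) (hpQ : p - 1 = d * Q) (hQd : d ≤ Q)
    (hextra : Q = d → ¬ (Q ∣ n)) :
    ∃ t r : ℕ, 0 < t ∧ t ≤ p - 2 ∧ r ≤ t ∧
      ∀ j, j ≤ t → ((p - 1) ∣ (n * t + D * j) ↔ j = r) := by
  classical
  have hQpos : 0 < Q := by omega
  haveI : NeZero Q := ⟨hQpos.ne'⟩
  obtain ⟨cz, hkey, hcz⟩ := exists_cz p n D d Q (by omega) hd hpQ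
  set r : ℕ → ℕ := fun s => (cz * (s : ℕ)).val with hrdef
  have hrlt : ∀ s, r s < Q := fun s => ZMod.val_lt _
  have hrcast : ∀ s : ℕ, ((r s : ℕ) : ZMod Q) = cz * (s : ℕ) := fun s =>
    ZMod.natCast_rightInverse _
  have hex : ∃ s : ℕ, 1 ≤ s ∧ r s ≤ d * s := by
    refine ⟨Q, by omega, ?_⟩
    have := hrlt Q
    have h2 : Q ≤ d * Q := Nat.le_mul_of_pos_left Q (by omega)
    omega
  obtain ⟨s, ⟨hs1, hs2⟩, hmin⟩ :
      ∃ s, (1 ≤ s ∧ r s ≤ d * s) ∧ ∀ s' < s, ¬(1 ≤ s' ∧ r s' ≤ d * s') :=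
    ⟨Nat.find hex, Nat.find_spec hex, fun s' h => Nat.find_min hex h⟩
  have hstep : 2 ≤ s → r s = (r (s - 1) + r 1) % Q := by
    intro h2s
    have hcast : ((s : ℕ) : ZMod Q) = (((s - 1 : ℕ) : ZMod Q) + ((1 : ℕ) : ZMod Q)) := by
      rw [← Nat.cast_add]
      congr 1
      omega
    have heq : cz * ((s : ℕ) : ZMod Q) = cz * ((s - 1 : ℕ) : ZMod Q) + cz * ((1 : ℕ) : ZMod Q) := by
      rw [hcast]; ring
    show (cz * ((s : ℕ) : ZMod Q)).val = _
    rw [heq, ZMod.val_add]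
  have hgtaux : 2 ≤ s → d * (s - 1) < r (s - 1) := by
    intro h2s
    have hnot : ¬ (1 ≤ s - 1 ∧ r (s - 1) ≤ d * (s - 1)) := hmin (s - 1) (by omega)
    by_contra hc
    push_neg at hc
    exact hnot ⟨by omega, hc⟩
  have hds : 2 ≤ s → d * (s - 1) + d = d * s := by
    intro h2s
    rw [← Nat.mul_succ]
    congr 1
    omega
  have hwin : d * s < r s + Q := by
    by_contra hw
    push_neg at hw
    rcases eq_or_lt_of_le hs1 with hseq | hs2'
    · have hs1' : s = 1 := hseq.symm
      rw [hs1', mul_one] at hw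
      have hr10 : r 1 = 0 ∧ Q = d := by omega
      have hcz0 : cz = 0 := by
        have h5 := hrcast 1
        rw [hr10.1] at h5
        simpa using h5.symm
      exact hextra hr10.2 ((ZMod.natCast_eq_zero_iff n Q).mp (hcz.mpr hcz0))
    · have h2s : 2 ≤ s := hs2'
      have hgt := hgtaux h2s
      have hA := hstep h2s
      have hds' := hds h2s
      have hmod : (r (s - 1) + r 1) % Q = r (s - 1) + r 1 ∨
          (r (s - 1) + r 1) % Q = r (s - 1) + r 1 - Q := by
        rcases lt_or_ge (r (s - 1) + r 1) Q with h | h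
        · left; exact Nat.mod_eq_of_lt h
        · right
          rw [Nat.mod_eq_sub_mod h]
          apply Nat.mod_eq_of_lt
          have := hrlt (s - 1); have := hrlt 1
          omega
      have hr1d : r 1 ≤ d * 1 := by
        have := hrlt (s - 1)
        omega
      exact hmin 1 (by omega) ⟨le_refl 1, hr1d⟩
  have hbound : d * s ≤ Q + d - 2 := by
    rcases eq_or_lt_of_le hs1 with hseq | hs2'
    · have hs1' : s = 1 := hseq.symm
      rw [hs1', mul_one]
      omega
    · have h2s : 2 ≤ s := hs2'
      have hgt := hgtaux h2s
      have hds' := hds h2s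
      have := hrlt (s - 1)
      omega
  have htb : d * s ≤ p - 2 := by
    have h2Q : 2 * Q ≤ d * Q := Nat.mul_le_mul_right Q hd2
    omega
  refine ⟨d * s, r s, Nat.mul_pos (by omega) (by omega), htb, hs2, ?_⟩
  intro j hj
  rw [hkey s j]
  constructor
  · intro h
    have h2 : ((j : ℕ) : ZMod Q) = ((r s : ℕ) : ZMod Q) := by rw [h, hrcast s]
    have h3 : j % Q = r s % Q := (ZMod.natCast_eq_natCast_iff _ _ _).mp h2
    have h4 : r s % Q = r s := Nat.mod_eq_of_lt (hrlt s)
    have h5 : Q * (j / Q) + j % Q = j := Nat.div_add_mod j Q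
    rcases Nat.eq_zero_or_pos (j / Q) with hk | hk
    · rw [hk] at h5; omega
    · have : Q ≤ Q * (j / Q) := Nat.le_mul_of_pos_right Q hk
      omega
  · rintro rfl
    exact hrcast s

theorem no_singleton (p : ℕ) [Fact p.Prime] (m n : ℕ) (hmn : n < m) (hn : 0 < n)
    (a : ZMod p) (ha : a ≠ 0)
    (hperm : Function.Bijective (fun x : ZMod p => x ^ m + a * x ^ n))
    (t r : ℕ) (ht1 : 0 < t) (ht2 : t ≤ p - 2) (hr : r ≤ t)
    (hiff : ∀ j, j ≤ t → ((p - 1) ∣ (n * t + (m - n) * j) ↔ j = r)) : False := by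
  classical
  have H := hermite p m n hmn hn a hperm t ht1 ht2
  have hset : (Finset.range (t + 1)).filter (fun j => (p - 1) ∣ (n * t + (m - n) * j))
      = {r} := by
    ext j
    simp only [Finset.mem_filter, Finset.mem_range, Nat.lt_succ_iff, Finset.mem_singleton]
    constructor
    · rintro ⟨h1, h2⟩
      exact (hiff j h1).mp h2
    · rintro rfl
      exact ⟨hr, (hiff _ hr).mpr rfl⟩
  rw [hset, Finset.sum_singleton] at H
  have hp2 : 2 ≤ p := (Fact.out : p.Prime).two_le
  have h1 : (t.choose r : ZMod p) ≠ 0 := by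
    intro h
    have hdvd : p ∣ t.choose r := (ZMod.natCast_eq_zero_iff _ p).mp h
    have hdvd2 : t.choose r ∣ Nat.factorial t :=
      ⟨Nat.factorial r * Nat.factorial (t - r), by
        rw [← Nat.choose_mul_factorial_mul_factorial hr]; ring⟩
    have := (Nat.Prime.dvd_factorial (Fact.out : p.Prime)).mp
      (dvd_trans hdvd hdvd2)
    omega
  exact (mul_ne_zero h1 (pow_ne_zero _ ha)) H

theorem n_odd' (p : ℕ) [Fact p.Prime] (hp5 : 5 < p) (m n : ℕ) (hmn : n < m)
    (a : ZMod p)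
    (hperm : Function.Bijective (fun x : ZMod p => x ^ m + a * x ^ n))
    (h2D : 2 ∣ m - n) : ¬ 2 ∣ n := by
  intro h2n
  have h2m : 2 ∣ m := by omega
  have heq : (fun x : ZMod p => x ^ m + a * x ^ n) 1
      = (fun x : ZMod p => x ^ m + a * x ^ n) (-1) := by
    simp only [one_pow]
    obtain ⟨k1, hk1⟩ := h2m
    obtain ⟨k2, hk2⟩ := h2n
    rw [Even.neg_one_pow ⟨k1, by omega⟩, Even.neg_one_pow ⟨k2, by omega⟩]
  have h1 : (1 : ZMod p) = -1 := hperm.injective heq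
  have h2 : ((2 : ℕ) : ZMod p) = 0 := by push_cast; linear_combination h1
  have := Nat.le_of_dvd (by norm_num) ((ZMod.natCast_eq_zero_iff 2 p).mp h2)
  omega

theorem p13_case (m n : ℕ) (hmn : n < m) (hn : 0 < n) (a : ZMod 13) (ha : a ≠ 0)
    (hperm : Function.Bijective (fun x : ZMod 13 => x ^ m + a * x ^ n))
    (hd : (m - n).gcd (13 - 1) = 4) : False := by
  classical
  obtain ⟨cz, hkey, hcz⟩ := exists_cz 13 n (m - n) 4 3 (by norm_num) hd (by norm_num)
  have H := @hermite 13 ⟨by norm_num⟩ m n hmn hn a hperm 4 (by norm_num) (by norm_num)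
  have hpred : ∀ j ∈ Finset.range 5,
      ((13 - 1 ∣ n * 4 + (m - n) * j) ↔ ((j : ZMod 3) = cz)) := by
    intro j _
    have h := hkey 1 j
    rw [mul_one] at h
    simpa using h
  rw [Finset.filter_congr hpred] at H
  have hfer : a ^ 12 = 1 := by
    haveI : Fact (Nat.Prime 13) := ⟨by norm_num⟩
    have h := ZMod.pow_card_sub_one_eq_one ha
    norm_num at h
    exact h
  have c0 : ((0 : ℕ) : ZMod 3) = 0 := by decide
  have c1 : ((1 : ℕ) : ZMod 3) = 1 := by decide
  have c2 : ((2 : ℕ) : ZMod 3) = 2 := by decide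
  have c3 : ((3 : ℕ) : ZMod 3) = 0 := by decide
  have c4 : ((4 : ℕ) : ZMod 3) = 1 := by decide
  have trich : ∀ z : ZMod 3, z = 0 ∨ z = 1 ∨ z = 2 := by decide
  rw [Finset.sum_filter] at H
  simp only [Finset.sum_range_succ, Finset.sum_range_zero, c0, c1, c2, c3, c4] at H
  rcases trich cz with h | h | h <;> rw [h] at H
  · -- cz = 0 : contributions j = 0, 3
    simp only [show (0 : ZMod 3) = 0 ↔ True by simp, show (1 : ZMod 3) = 0 ↔ False by decide,
      show (2 : ZMod 3) = 0 ↔ False by decide, if_true, if_false] at H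
    norm_num [Nat.choose] at H
    -- H : a ^ 4 + 4 * a = 0  (roughly)
    have h3 : a ^ 3 = -4 := by
      haveI : Fact (Nat.Prime 13) := ⟨by norm_num⟩
      have hfac : a * (a ^ 3 + 4) = 0 := by linear_combination H
      rcases mul_eq_zero.mp hfac with h' | h'
      · exact absurd h' ha
      · linear_combination h'
    have hcontr : ((-4 : ZMod 13)) ^ 4 = 1 := by
      rw [← h3, ← pow_mul]
      exact hfer
    have hfalse : ((-4 : ZMod 13)) ^ (4 : ℕ) = 1 → False := by decide
    exact hfalse hcontr
  · -- cz = 1 : contributions j = 1, 4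
    simp only [show (0 : ZMod 3) = 1 ↔ False by decide, show (1 : ZMod 3) = 1 ↔ True by simp,
      show (2 : ZMod 3) = 1 ↔ False by decide, if_true, if_false] at H
    norm_num [Nat.choose] at H
    have h4 : (4 : ZMod 13) * a ^ 3 = -1 := by linear_combination H
    have hcontr : (4 : ZMod 13) ^ 4 = 1 := by
      have hq := congrArg (fun z : ZMod 13 => z ^ 4) h4
      simp only [mul_pow, ← pow_mul] at hq
      norm_num at hq
      rw [hfer, mul_one] at hq
      exact hq
    have hfalse : ((4 : ZMod 13)) ^ (4 : ℕ) = 1 → False := by decide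
    exact hfalse hcontr
  · -- cz = 2 : contribution j = 2
    simp only [show (0 : ZMod 3) = 2 ↔ False by decide, show (1 : ZMod 3) = 2 ↔ False by decide,
      show (2 : ZMod 3) = 2 ↔ True by simp, if_true, if_false] at H
    norm_num [Nat.choose] at H
    have hfalse : ((6 : ZMod 13)) = 0 → False := by decide
    haveI : Fact (Nat.Prime 13) := ⟨by norm_num⟩
    rcases mul_eq_zero.mp H with h' | h'
    · exact hfalse h'
    · exact ha ((pow_eq_zero_iff (by norm_num : (2 : ℕ) ≠ 0)).mp h')


theorem stmt_0 (p : ℕ) (hp : p.Prime) (hp5 : 5 < p)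
    (m n : ℕ) (hmn : m > n) (hn : n > 0)
    (a : ZMod p) (ha : a ≠ 0)
    (hperm : Function.Bijective
      (fun x : ZMod p => Polynomial.eval x (X ^ m + C a * X ^ n))) :
    Nat.gcd (m - n) (p - 1) ≠ 2 ∧ Nat.gcd (m - n) (p - 1) ≠ 4 := by
  haveI hfact : Fact p.Prime := ⟨hp⟩
  have hperm' : Function.Bijective (fun x : ZMod p => x ^ m + a * x ^ n) := by
    simpa only [Polynomial.eval_add, Polynomial.eval_mul, Polynomial.eval_pow,
      Polynomial.eval_X, Polynomial.eval_C] using hperm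
  constructor
  · intro hd
    have hdvd : 2 ∣ p - 1 := hd ▸ Nat.gcd_dvd_right (m - n) (p - 1)
    obtain ⟨Q, hpQ⟩ := hdvd
    have hQd : 2 ≤ Q := by omega
    have hextra : Q = 2 → ¬ (Q ∣ n) := by
      intro h
      omega
    obtain ⟨t, r, ht1, ht2, hr, hiff⟩ :=
      find_singleton p n (m - n) 2 Q (le_refl 2) hd hpQ hQd hextra
    exact no_singleton p m n hmn hn a ha hperm' t r ht1 ht2 hr hiff
  · intro hd
    have hdvd : 4 ∣ p - 1 := hd ▸ Nat.gcd_dvd_right (m - n) (p - 1)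
    obtain ⟨Q, hpQ⟩ := hdvd
    by_cases h13 : p = 13
    · subst h13
      exact p13_case m n hmn hn a ha hperm' hd
    · have h9 : p ≠ 9 := by
        intro h
        rw [h] at hp
        norm_num at hp
      have h17 : 17 ≤ p := by omega
      have hQd : 4 ≤ Q := by omega
      have hextra : Q = 4 → ¬ (Q ∣ n) := by
        intro hQ4 hQn
        have h2D : 2 ∣ m - n := dvd_trans (by norm_num) (hd ▸ Nat.gcd_dvd_left (m - n) (p - 1))
        have hodd := n_odd' p hp5 m n hmn a hperm' h2D
        rw [hQ4] at hQn
        exact hodd (dvd_trans (by norm_num) hQn)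
      obtain ⟨t, r, ht1, ht2, hr, hiff⟩ :=
        find_singleton p n (m - n) 4 Q (by norm_num) hd hpQ hQd hextra
      exact no_singleton p m n hmn hn a ha hperm' t r ht1 ht2 hr hiff
end

section
/- Let q be a prime power with q > 1 and let f be a polynomial over the finite field F_q that is a permutation polynomial of F_q. Then the greatest common divisor of the degrees of the (nonzero) terms of f (i.e., the gcd of the elements of the support of f) is coprime to q - 1. -/
open Polynomial

theorem stmt_1 (q : ℕ) (hq : IsPrimePow q) (hq1 : 1 < q)
    (F : Type*) [Field F] [Fintype F] (hcard : Fintype.card F = q)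
    (f : Polynomial F)
    (hperm : Function.Bijective (fun x : F => Polynomial.eval x f)) :
    Nat.Coprime (f.support.gcd id) (q - 1) := by
  classical
  by_contra h
  obtain ⟨p, hp, hpd, hpq⟩ := Nat.Prime.not_coprime_iff_dvd.mp h
  have hcardU : Fintype.card Fˣ = q - 1 := by
    rw [Fintype.card_units, hcard]
  haveI : Fact (Nat.Prime p) := ⟨hp⟩
  obtain ⟨u, hu⟩ := exists_prime_orderOf_dvd_card (G := Fˣ) p (by rw [hcardU]; exact hpq)
  have hup : (u : F) ^ p = 1 := by
    have : u ^ p = 1 := by rw [← hu]; exact pow_orderOf_eq_one u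
    rw [← Units.val_pow_eq_pow_val, this, Units.val_one]
  have hune : (u : F) ≠ 1 := by
    intro h1
    have : u = 1 := Units.ext h1
    rw [this, orderOf_one] at hu
    exact hp.one_lt.ne' hu.symm
  have key : Polynomial.eval (u : F) f = Polynomial.eval 1 f := by
    rw [eval_eq_sum, eval_eq_sum, Polynomial.sum, Polynomial.sum]
    apply Finset.sum_congr rfl
    intro e he
    have hpe : p ∣ e := hpd.trans (Finset.gcd_dvd he)
    obtain ⟨k, rfl⟩ := hpe
    rw [pow_mul, hup, one_pow, one_pow]
  exact hune (hperm.injective key)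
end

section
/- Let q be a prime power, let n, k be positive integers, and let a be a nonzero element of F_q. Set d = gcd(k, q - 1). If f(x) = x^n·(x^k + a) is a permutation polynomial of F_q that is nontrivial (i.e., q - 1 does not divide k), then there exists a positive integer e such that x^e·(x^d + a) is a nontrivial permutation polynomial of F_q (i.e., it permutes F_q and q - 1 does not divide d). -/
open Polynomial

theorem stmt_2 (q : ℕ) (hq : IsPrimePow q)
    (F : Type*) [Field F] [Fintype F] (hcard : Fintype.card F = q)
    (n k : ℕ) (hn : 0 < n) (hk : 0 < k) (a : F) (ha : a ≠ 0)
    (hnontriv : ¬ (q - 1) ∣ k)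
    (hperm : Function.Bijective
      (fun x : F => Polynomial.eval x (X ^ n * (X ^ k + C a)))) :
    ∃ e : ℕ, 0 < e ∧
      Function.Bijective
        (fun x : F => Polynomial.eval x (X ^ e * (X ^ Nat.gcd k (q - 1) + C a))) ∧
      ¬ (q - 1) ∣ Nat.gcd k (q - 1) := by
  simp only [eval_mul, eval_pow, eval_add, eval_X, eval_C] at hperm ⊢
  set N := q - 1 with hNdef
  have hq2 : 2 ≤ q := hq.two_le
  have hN1 : 1 ≤ N := by omega
  have hN2 : 2 ≤ N := by
    by_contra h
    have hN1' : N = 1 := by omega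
    exact hnontriv (hN1' ▸ one_dvd k)
  haveI : NeZero N := ⟨by omega⟩
  set d := Nat.gcd k N with hddef
  have hd0 : 0 < d := Nat.gcd_pos_of_pos_left N hk
  have hdk : d ∣ k := Nat.gcd_dvd_left k N
  have hdN : d ∣ N := Nat.gcd_dvd_right k N
  have hnd : ¬ N ∣ d := fun h => hnontriv (h.trans hdk)
  set m := k / d with hmdef
  set N' := N / d with hN'def
  have hN'dvd : N' ∣ N := Nat.div_dvd_of_dvd hdN
  have hcop : Nat.Coprime m N' := Nat.coprime_div_gcd_div_gcd hd0
  -- get u coprime to N with u * d ≡ k [MOD N]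
  obtain ⟨U, hU⟩ := ZMod.unitsMap_surjective hN'dvd (ZMod.unitOfCoprime m hcop)
  set u := (U : ZMod N).val with hudef
  have hucop : Nat.Coprime u N := ZMod.val_coe_unit_coprime U
  have hu0 : 0 < u := by
    rcases Nat.eq_zero_or_pos u with h | h
    · exfalso; rw [h] at hucop; simp [Nat.Coprime] at hucop; omega
    · exact h
  have hcongr : u ≡ m [MOD N'] := by
    have h1 : ((u : ZMod N') : ZMod N') = ((m : ZMod N') : ZMod N') := by
      have h2 : ZMod.castHom hN'dvd (ZMod N') (U : ZMod N) = (m : ZMod N') := by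
        have := congrArg (Units.val) hU
        simpa [ZMod.unitsMap_def] using this
      have h3 : ((u : ℕ) : ZMod N) = (U : ZMod N) := by
        rw [hudef, ZMod.natCast_val, ZMod.cast_id]
      calc ((u : ZMod N') : ZMod N') = ZMod.castHom hN'dvd (ZMod N') ((u : ℕ) : ZMod N) := by
            simp
        _ = (m : ZMod N') := by rw [h3, h2]
    exact (ZMod.natCast_eq_natCast_iff _ _ _).mp h1
  have hud : u * d ≡ k [MOD N] := by
    have h := hcongr.mul_right' d
    have hNN : N' * d = N := Nat.div_mul_cancel hdN
    have hmd : m * d = k := Nat.div_mul_cancel hdk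
    rw [hmd, hNN] at h
    exact h
  -- inverse of u mod N
  obtain ⟨v, -, hv⟩ := Nat.exists_mul_mod_eq_one_of_coprime hucop (by omega)
  have huv : u * v ≡ 1 [MOD N] := by
    unfold Nat.ModEq; rw [hv]; exact (Nat.mod_eq_of_lt (by omega)).symm
  set e := n * v + N with hedef
  have he0 : 0 < e := by positivity
  have heu : e * u ≡ n [MOD N] := by
    have : e * u = n * (u * v) + N * u := by ring
    calc e * u = n * (u * v) + N * u := this
      _ ≡ n * 1 + N * u [MOD N] := (huv.mul_left n).add_right _
      _ ≡ n * 1 + 0 [MOD N] := Nat.ModEq.add_left _ (Nat.modEq_zero_iff_dvd.mpr ⟨u, rfl⟩)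
      _ = n := by ring
  -- key: pow depends only on exponent mod N for nonzero x
  have hcardN : Fintype.card F - 1 = N := by rw [hcard]
  have hpowN : ∀ x : F, x ≠ 0 → x ^ N = 1 := by
    intro x hx
    rw [← hcardN]
    exact FiniteField.pow_card_sub_one_eq_one x hx
  have hpow : ∀ (x : F), x ≠ 0 → ∀ s t : ℕ, s ≡ t [MOD N] → x ^ s = x ^ t := by
    have key : ∀ (x : F), x ≠ 0 → ∀ s : ℕ, x ^ s = x ^ (s % N) := by
      intro x hx s
      conv_lhs => rw [← Nat.div_add_mod s N]
      rw [pow_add, pow_mul, hpowN x hx, one_pow, one_mul]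
    intro x hx s t hst
    rw [key x hx s, key x hx t, hst]
  -- x ↦ x^u is bijective
  have hσ : Function.Bijective (fun x : F => x ^ u) := by
    rw [Finite.injective_iff_bijective.symm]
    intro x y hxy
    simp only at hxy
    by_cases hx : x = 0
    · subst hx
      rw [zero_pow (by omega), eq_comm, pow_eq_zero_iff (by omega)] at hxy
      exact hxy.symm
    · have hy : y ≠ 0 := by
        intro h; subst h; rw [zero_pow (by omega), pow_eq_zero_iff (by omega)] at hxy
        exact hx hxy
      have h1 : (x * y⁻¹) ^ u = 1 := by
        rw [mul_pow, inv_pow, hxy, mul_inv_cancel₀ (pow_ne_zero _ hy)]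
      have h2 : (x * y⁻¹) ^ N = 1 := hpowN _ (by simp [hx, hy])
      have ho : orderOf (x * y⁻¹) ∣ Nat.gcd u N :=
        Nat.dvd_gcd (orderOf_dvd_of_pow_eq_one h1) (orderOf_dvd_of_pow_eq_one h2)
      rw [hucop] at ho
      have : x * y⁻¹ = 1 := orderOf_eq_one_iff.mp (Nat.eq_one_of_dvd_one ho ▸ rfl)
      exact (mul_inv_eq_one₀ hy).mp this
  refine ⟨e, he0, ?_, hnd⟩
  have hcomp : (fun x : F => x ^ e * (x ^ d + a)) ∘ (fun x : F => x ^ u)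
      = fun x : F => x ^ n * (x ^ k + a) := by
    funext x
    simp only [Function.comp_apply]
    by_cases hx : x = 0
    · subst hx
      rw [zero_pow (by omega)]
      rw [zero_pow (by omega), zero_pow (by omega), zero_pow (by omega), zero_pow (by omega)]
    · rw [← pow_mul, ← pow_mul]
      rw [hpow x hx (u * e) n (by rw [mul_comm]; exact heu),
        hpow x hx (u * d) k hud]
  rw [← hcomp] at hperm
  exact (Function.Bijective.of_comp_iff _ hσ).mp hperm
end

section
/- Let q be a prime power such that q - 1 is a Mersenne prime (that is, q - 1 is prime and q is a power of 2, i.e., q - 1 = 2^s - 1 for some s). Then there is no nontrivial permutation binomial over F_q: there do not exist positive integers n, k with (q - 1) ∤ k and a nonzero element a of F_q such that x^n·(x^k + a) is a permutation polynomial of F_q. -/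
open Polynomial

theorem stmt_3 (q s : ℕ) (hq : IsPrimePow q) (hq2 : q = 2 ^ s)
    (hmersenne : Nat.Prime (q - 1))
    (F : Type*) [Field F] [Fintype F] (hcard : Fintype.card F = q) :
    ¬ ∃ (n k : ℕ) (a : F), 0 < n ∧ 0 < k ∧ ¬ (q - 1) ∣ k ∧ a ≠ 0 ∧
      Function.Bijective
        (fun x : F => Polynomial.eval x (X ^ n * (X ^ k + C a))) := by
  rintro ⟨n, k, a, hn, hk, hndvd, ha, hbij⟩
  have hcop : (Nat.card Fˣ).Coprime k := by
    have : Nat.card Fˣ = q - 1 := by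
      classical
      rw [Nat.card_eq_fintype_card, Fintype.card_units, hcard]
    rw [this]
    exact (Nat.Prime.coprime_iff_not_dvd hmersenne).mpr hndvd
  obtain ⟨u, hu⟩ := (powCoprime hcop).surjective (Units.mk0 (-a) (neg_ne_zero.mpr ha))
  have hux : (u : F) ^ k = -a := by
    have := congrArg (Units.val) hu
    simpa [powCoprime] using this
  have h0 : (fun x : F => Polynomial.eval x (X ^ n * (X ^ k + C a))) (u : F)
      = (fun x : F => Polynomial.eval x (X ^ n * (X ^ k + C a))) 0 := by
    simp [hux, zero_pow hn.ne']
  have := hbij.injective h0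
  exact u.ne_zero this
end

section
/- Let q be a prime power, let d, n, e be positive integers with d dividing q - 1, gcd(n·e, d) = 1, and n ≡ e (mod (q - 1)/d), and let a be a nonzero element of F_q. Then x^n·(x^d + a) is a permutation polynomial of F_q if and only if x^e·(x^d + a) is a permutation polynomial of F_q. -/
open Polynomial

section Aux

variable {F : Type*} [Field F] [Fintype F]

lemma aux_pow_congr {x : F} (hx : x ≠ 0) {k l : ℕ}
    (h : k ≡ l [MOD Fintype.card F - 1]) : x ^ k = x ^ l := by
  have h1 : x ^ (Fintype.card F - 1) = 1 := FiniteField.pow_card_sub_one_eq_one x hx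
  calc x ^ k = x ^ (k % (Fintype.card F - 1)) := pow_eq_pow_mod _ h1
    _ = x ^ (l % (Fintype.card F - 1)) := by rw [h]
    _ = x ^ l := (pow_eq_pow_mod _ h1).symm

lemma aux_key (d n : ℕ) (hd : 0 < d) (hn : 0 < n) (hgcd : Nat.gcd n d = 1)
    (a : F) :
    Function.Bijective (fun x : F => x ^ n * (x ^ d + a)) ↔
      ((∀ x : F, x ≠ 0 → x ^ d + a ≠ 0) ∧
        ∀ x1 x2 : F, x1 ≠ 0 → x2 ≠ 0 →
          x1 ^ (d * n) * (x1 ^ d + a) ^ d = x2 ^ (d * n) * (x2 ^ d + a) ^ d →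
          x1 ^ d = x2 ^ d) := by
  have hf0 : (0 : F) ^ n * ((0 : F) ^ d + a) = 0 := by
    rw [zero_pow hn.ne', zero_mul]
  constructor
  · intro hbij
    have hinj := hbij.injective
    have h0 : ∀ x : F, x ≠ 0 → x ^ d + a ≠ 0 := by
      intro x hx hxa
      apply hx
      apply hinj
      simp only [hxa, mul_zero, hf0]
    refine ⟨h0, ?_⟩
    intro x1 x2 hx1 hx2 heq
    set f1 : F := x1 ^ n * (x1 ^ d + a) with hf1def
    set f2 : F := x2 ^ n * (x2 ^ d + a) with hf2def
    have hf1 : f1 ≠ 0 := mul_ne_zero (pow_ne_zero _ hx1) (h0 x1 hx1)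
    have hf2 : f2 ≠ 0 := mul_ne_zero (pow_ne_zero _ hx2) (h0 x2 hx2)
    have hfd : f1 ^ d = f2 ^ d := by
      rw [hf1def, hf2def, mul_pow, mul_pow, ← pow_mul, ← pow_mul,
        Nat.mul_comm n d]
      exact heq
    set ζ : F := f2 * f1⁻¹ with hζdef
    have hζd : ζ ^ d = 1 := by
      rw [hζdef, mul_pow, inv_pow, ← hfd, mul_inv_cancel₀ (pow_ne_zero _ hf1)]
    have htot : 0 < Nat.totient d := Nat.totient_pos.mpr hd
    set b : ℕ := n ^ (Nat.totient d - 1) with hbdef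
    have hnb : n * b ≡ 1 [MOD d] := by
      have : n * b = n ^ Nat.totient d := by
        rw [hbdef, ← pow_succ', Nat.sub_add_cancel htot]
      rw [this]
      exact Nat.ModEq.pow_totient hgcd
    set η : F := ζ ^ b with hηdef
    have hηd : η ^ d = 1 := by
      rw [hηdef, ← pow_mul, Nat.mul_comm, pow_mul, hζd, one_pow]
    have hηn : η ^ n = ζ := by
      rw [hηdef, ← pow_mul, Nat.mul_comm b n]
      calc ζ ^ (n * b) = ζ ^ (n * b % d) := pow_eq_pow_mod _ hζd
        _ = ζ ^ (1 % d) := by rw [hnb]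
        _ = ζ ^ 1 := (pow_eq_pow_mod _ hζd).symm
        _ = ζ := pow_one ζ
    have hkey : η * x1 = x2 := by
      apply hinj
      show (η * x1) ^ n * ((η * x1) ^ d + a) = f2
      rw [mul_pow, mul_pow, hηd, one_mul, hηn, mul_assoc, ← hf1def, hζdef,
        mul_assoc, inv_mul_cancel₀ hf1, mul_one]
    rw [← hkey, mul_pow, hηd, one_mul]
  · rintro ⟨h0, hinj2⟩
    rw [← Finite.injective_iff_bijective]
    intro x1 x2 heq
    simp only at heq
    by_cases hx1 : x1 = 0
    · subst hx1
      rw [hf0] at heq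
      by_contra hx2
      exact mul_ne_zero (pow_ne_zero _ (Ne.symm hx2)) (h0 x2 (Ne.symm hx2)) heq.symm
    by_cases hx2 : x2 = 0
    · subst hx2
      rw [hf0] at heq
      exact absurd heq (mul_ne_zero (pow_ne_zero _ hx1) (h0 x1 hx1))
    have hdeq : x1 ^ d = x2 ^ d := by
      apply hinj2 x1 x2 hx1 hx2
      rw [Nat.mul_comm d n, pow_mul, pow_mul, ← mul_pow, ← mul_pow, heq]
    set ζ : F := x2 * x1⁻¹ with hζdef
    have hζd : ζ ^ d = 1 := by
      rw [hζdef, mul_pow, inv_pow, ← hdeq, mul_inv_cancel₀ (pow_ne_zero _ hx1)]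
    have hζn : ζ ^ n = 1 := by
      rw [← hdeq] at heq
      have hxn : x1 ^ n = x2 ^ n := mul_right_cancel₀ (h0 x1 hx1) heq
      rw [hζdef, mul_pow, inv_pow, ← hxn, mul_inv_cancel₀ (pow_ne_zero _ hx1)]
    have hζ1 : ζ = 1 := by
      have h1 : orderOf ζ ∣ n := orderOf_dvd_of_pow_eq_one hζn
      have h2 : orderOf ζ ∣ d := orderOf_dvd_of_pow_eq_one hζd
      have : orderOf ζ ∣ 1 := hgcd ▸ Nat.dvd_gcd h1 h2
      exact orderOf_eq_one_iff.mp (Nat.eq_one_of_dvd_one this ▸ rfl)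
    have : x2 = x1 := by
      have := hζdef ▸ hζ1
      field_simp at this
      exact this
    exact this.symm

end Aux

theorem stmt_4 (q : ℕ) (hq : IsPrimePow q)
    (F : Type*) [Field F] [Fintype F] (hcard : Fintype.card F = q)
    (d n e : ℕ) (hd : 0 < d) (hn : 0 < n) (he : 0 < e)
    (hdvd : d ∣ q - 1) (hgcd : Nat.gcd (n * e) d = 1)
    (hcong : n ≡ e [MOD (q - 1) / d])
    (a : F) (ha : a ≠ 0) :
    Function.Bijective
        (fun x : F => Polynomial.eval x (X ^ n * (X ^ d + C a))) ↔
      Function.Bijective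
        (fun x : F => Polynomial.eval x (X ^ e * (X ^ d + C a))) := by
  have hgn : Nat.gcd n d = 1 :=
    Nat.Coprime.coprime_dvd_left (dvd_mul_right n e) hgcd
  have hge : Nat.gcd e d = 1 :=
    Nat.Coprime.coprime_dvd_left (dvd_mul_left e n) hgcd
  have hpow : ∀ x : F, x ≠ 0 → x ^ (d * n) = x ^ (d * e) := by
    intro x hx
    apply aux_pow_congr hx
    rw [hcard]
    have h1 : d * n ≡ d * e [MOD d * ((q - 1) / d)] := hcong.mul_left' (c := d)
    rwa [Nat.mul_div_cancel' hdvd] at h1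
  simp only [eval_mul, eval_pow, eval_add, eval_X, eval_C]
  rw [aux_key d n hd hn hgn a, aux_key d e hd he hge a]
  constructor
  · rintro ⟨h0, hinj⟩
    refine ⟨h0, fun x1 x2 hx1 hx2 heq => hinj x1 x2 hx1 hx2 ?_⟩
    rw [hpow x1 hx1, hpow x2 hx2]
    exact heq
  · rintro ⟨h0, hinj⟩
    refine ⟨h0, fun x1 x2 hx1 hx2 heq => hinj x1 x2 hx1 hx2 ?_⟩
    rw [hpow x1 hx1, hpow x2 hx2] at heq
    exact heq
end

section
/- Let q be a prime power and let f be a polynomial over F_q. Then f is a permutation polynomial of F_q if and only if both of the following hold: (1) for each integer i with 0 < i < q - 1, the remainder of f^i upon division by x^q - x has degree strictly less than q - 1; and (2) f has precisely one root in F_q. -/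
open Polynomial Finset Function

section Aux

variable {F : Type*} [Field F] [Fintype F]

lemma aux_sum_pow_card_sub_one :
    ∑ x : F, x ^ (Fintype.card F - 1) = -1 := by
  classical
  have h2 : 1 < Fintype.card F := Fintype.one_lt_card
  have h0 : (0 : F) ^ (Fintype.card F - 1) = 0 := zero_pow (by omega)
  have key : ∀ x : F, x ^ (Fintype.card F - 1) = if x = 0 then 0 else 1 := by
    intro x
    by_cases hx : x = 0
    · simp [hx, h0]
    · simp [hx, FiniteField.pow_card_sub_one_eq_one x hx]
  simp only [key]
  rw [Finset.sum_ite, Finset.sum_const, Finset.sum_const, smul_zero, zero_add]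
  have h1 : (Finset.univ.filter (fun x : F => x = 0)).card = 1 := by
    rw [show (Finset.univ.filter (fun x : F => x = 0)) = {0} by ext y; simp]
    simp
  rw [Finset.filter_not, Finset.card_sdiff_of_subset (Finset.filter_subset _ _), Finset.card_univ, h1,
    nsmul_eq_mul]
  have : ((Fintype.card F - 1 : ℕ) : F) = -1 := by
    rw [Nat.cast_sub (le_of_lt h2), FiniteField.cast_card_eq_zero F]; simp
  rw [this, mul_one]

/-- For a polynomial of degree < card F, the sum of its values is minus the
coefficient of `X^(card F - 1)`. -/
lemma aux_sum_eval (g : F[X]) (hg : g.degree < (Fintype.card F : WithBot ℕ)) :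
    ∑ x : F, g.eval x = - g.coeff (Fintype.card F - 1) := by
  classical
  set q := Fintype.card F with hq
  have h2 : 1 < q := Fintype.one_lt_card
  have hnd : g.natDegree < q := by
    rcases eq_or_ne g 0 with rfl | hg0
    · simpa using h2.trans_le' (by norm_num)
    · exact natDegree_lt_iff_degree_lt hg0 |>.2 (by exact_mod_cast hg)
  have heval : ∀ x : F, g.eval x = ∑ k ∈ Finset.range q, g.coeff k * x ^ k := by
    intro x
    exact eval_eq_sum_range' hnd x
  calc ∑ x : F, g.eval x = ∑ x : F, ∑ k ∈ Finset.range q, g.coeff k * x ^ k := by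
        simp only [heval]
    _ = ∑ k ∈ Finset.range q, g.coeff k * ∑ x : F, x ^ k := by
        rw [Finset.sum_comm]
        simp [Finset.mul_sum]
    _ = - g.coeff (q - 1) := by
        have hqsucc : q = (q - 1) + 1 := by omega
        rw [hqsucc, Finset.sum_range_succ]
        have hzero : ∀ k ∈ Finset.range (q - 1), g.coeff k * ∑ x : F, x ^ k = 0 := by
          intro k hk
          rw [FiniteField.sum_pow_lt_card_sub_one F k (by simpa using Finset.mem_range.1 hk),
            mul_zero]
        rw [Finset.sum_eq_zero hzero, zero_add, ← hqsucc, aux_sum_pow_card_sub_one,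
          mul_neg_one]

lemma aux_eval_mod (g : F[X]) (x : F) :
    (g %ₘ (X ^ Fintype.card F - X)).eval x = g.eval x := by
  have h2 : 1 < Fintype.card F := Fintype.one_lt_card
  have hm : (X ^ Fintype.card F - X : F[X]).Monic :=
    monic_X_pow_sub (by simpa using (Nat.one_lt_cast.2 h2 : (1 : WithBot ℕ) < _))
  rw [modByMonic_eq_sub_mul_div _ (X ^ Fintype.card F - X), eval_sub, eval_mul, eval_sub, eval_pow, eval_X,
    FiniteField.pow_card, sub_self, zero_mul, sub_zero]

lemma aux_degree_mod (g : F[X]) :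
    (g %ₘ (X ^ Fintype.card F - X)).degree < (Fintype.card F : WithBot ℕ) := by
  have h2 : 1 < Fintype.card F := Fintype.one_lt_card
  have hm : (X ^ Fintype.card F - X : F[X]).Monic :=
    monic_X_pow_sub (by simpa using (Nat.one_lt_cast.2 h2 : (1 : WithBot ℕ) < _))
  have hdeg : (X ^ Fintype.card F - X : F[X]).degree = (Fintype.card F : WithBot ℕ) := by
    rw [degree_sub_eq_left_of_degree_lt]
    · exact degree_X_pow _
    · rw [degree_X_pow, degree_X]
      exact_mod_cast h2
  have := degree_modByMonic_lt g hm
  rwa [hdeg] at this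

end Aux

theorem stmt_5 (q : ℕ) (hq : IsPrimePow q)
    (F : Type*) [Field F] [Fintype F] (hcard : Fintype.card F = q)
    (f : Polynomial F) :
    Function.Bijective (fun x : F => Polynomial.eval x f) ↔
      ((∀ i : ℕ, 0 < i → i < q - 1 →
          ((f ^ i) %ₘ (X ^ q - X)).degree < ((q - 1 : ℕ) : WithBot ℕ)) ∧
        (∃! x : F, Polynomial.eval x f = 0)) := by
  classical
  subst hcard
  set q := Fintype.card F with hqdef
  have h2 : 1 < q := Fintype.one_lt_card
  -- key: sum of values of f^i for 0 < i < q-1 determines degree condition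
  have sum_iff : ∀ i : ℕ, ((f ^ i) %ₘ (X ^ q - X)).degree < ((q - 1 : ℕ) : WithBot ℕ) ↔
      (∑ x : F, (f.eval x) ^ i = 0) := by
    intro i
    have hdegmod := aux_degree_mod (f ^ i)
    have hsum : ∑ x : F, (f.eval x) ^ i = - ((f ^ i) %ₘ (X ^ q - X)).coeff (q - 1) := by
      rw [← aux_sum_eval _ hdegmod]
      exact Finset.sum_congr rfl fun x _ => by rw [aux_eval_mod, eval_pow]
    constructor
    · intro hd
      rw [hsum, coeff_eq_zero_of_degree_lt hd, neg_zero]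
    · intro hs
      rw [hsum] at hs
      have hc : ((f ^ i) %ₘ (X ^ q - X)).coeff (q - 1) = 0 := neg_eq_zero.mp hs
      rw [degree_lt_iff_coeff_zero]
      intro m hm
      rcases eq_or_lt_of_le (Nat.cast_le.mp hm : q - 1 ≤ m) with h | h
      · rw [← h]; exact hc
      · exact coeff_eq_zero_of_degree_lt (hdegmod.trans_le (by exact_mod_cast by omega))
  constructor
  · -- forward direction
    intro hb
    refine ⟨fun i hi0 hi1 => ?_, hb.existsUnique 0⟩
    rw [sum_iff]
    have : ∑ x : F, (f.eval x) ^ i = ∑ y : F, y ^ i :=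
      Fintype.sum_bijective _ hb _ _ fun x => rfl
    rw [this]
    exact FiniteField.sum_pow_lt_card_sub_one F i hi1
  · -- converse (Hermite)
    rintro ⟨hdeg, x₀, hx₀, huniq⟩
    -- sum of f(x)^i
    have hS : ∀ i : ℕ, i < q - 1 → ∑ x : F, (f.eval x) ^ i = 0 := by
      intro i hi
      rcases Nat.eq_zero_or_pos i with rfl | hi0
      · simp [FiniteField.cast_card_eq_zero F]
      · exact (sum_iff i).1 (hdeg i hi0 hi)
    have hind : ∀ x : F, (f.eval x) ^ (q - 1) = if f.eval x = 0 then 0 else 1 := by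
      intro x
      by_cases hx : f.eval x = 0
      · simp [hx, zero_pow (by omega : q - 1 ≠ 0)]
      · rw [if_neg hx]; exact FiniteField.pow_card_sub_one_eq_one _ hx
    have hroot : (Finset.univ.filter (fun x : F => f.eval x = 0)) = {x₀} := by
      ext y
      simp only [Finset.mem_filter, Finset.mem_univ, true_and, Finset.mem_singleton]
      exact ⟨fun h => huniq y h, fun h => h ▸ hx₀⟩
    have hStop : ∑ x : F, (f.eval x) ^ (q - 1) = -1 := by
      simp only [hind]
      rw [Finset.sum_ite, Finset.sum_const, Finset.sum_const, smul_zero, zero_add]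
      rw [Finset.filter_not, Finset.card_sdiff_of_subset (Finset.filter_subset _ _), Finset.card_univ,
        hroot, Finset.card_singleton, nsmul_eq_mul]
      have : ((q - 1 : ℕ) : F) = -1 := by
        rw [Nat.cast_sub (le_of_lt h2), FiniteField.cast_card_eq_zero F]; simp
      rw [this, mul_one]
    -- main claim: for every a, the count of preimages is 1 mod p
    have hsurj : Function.Surjective (fun x : F => f.eval x) := by
      intro a
      have key : ∑ x : F, (f.eval x - a) ^ (q - 1) = -1 := by
        have expand : ∀ x : F, (f.eval x - a) ^ (q - 1) =
            ∑ i ∈ Finset.range (q - 1 + 1),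
              (f.eval x) ^ i * (-a) ^ (q - 1 - i) * (q - 1).choose i := by
          intro x
          rw [sub_eq_add_neg]
          exact add_pow (f.eval x) (-a) (q - 1)
        calc ∑ x : F, (f.eval x - a) ^ (q - 1)
            = ∑ x : F, ∑ i ∈ Finset.range (q - 1 + 1),
                (f.eval x) ^ i * (-a) ^ (q - 1 - i) * (q - 1).choose i := by
              simp only [expand]
          _ = ∑ i ∈ Finset.range (q - 1 + 1),
                (∑ x : F, (f.eval x) ^ i) * ((-a) ^ (q - 1 - i) * (q - 1).choose i) := by
              rw [Finset.sum_comm]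
              refine Finset.sum_congr rfl fun i _ => by
                rw [Finset.sum_mul]
                exact Finset.sum_congr rfl fun x _ => by ring
          _ = -1 := by
              rw [Finset.sum_range_succ]
              have hz : ∀ i ∈ Finset.range (q - 1), (∑ x : F, (f.eval x) ^ i) *
                  ((-a) ^ (q - 1 - i) * (q - 1).choose i) = 0 := by
                intro i hi
                rw [hS i (Finset.mem_range.1 hi), zero_mul]
              rw [Finset.sum_eq_zero hz, zero_add, hStop, Nat.sub_self, pow_zero,
                Nat.choose_self]
              simp
      -- now if a had no preimage, each term would be 1, sum = q·1 = 0 ≠ -1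
      by_contra hne
      push_neg at hne
      have : ∀ x : F, (f.eval x - a) ^ (q - 1) = 1 := by
        intro x
        exact FiniteField.pow_card_sub_one_eq_one _ (sub_ne_zero.2 (hne x))
      rw [Finset.sum_congr rfl fun x _ => this x, Finset.sum_const, Finset.card_univ,
        nsmul_eq_mul, FiniteField.cast_card_eq_zero F, zero_mul] at key
      rw [eq_comm, neg_eq_zero] at key
      exact one_ne_zero key
    exact hsurj.bijective_of_finite
end

section
/- Let p be a prime, let n, k be positive integers with (p - 1) ∤ k, and let a be a nonzero element of F_p. If x^n·(x^k + a) is a permutation polynomial of F_p, then gcd(k, p - 1) > 2. -/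
open Polynomial

lemma sum_pow_zmod (p : ℕ) [hpf : Fact p.Prime] (M : ℕ) (hM : 0 < M) :
    ∑ x : ZMod p, x ^ M = if (p - 1) ∣ M then (-1 : ZMod p) else 0 := by
  have hp := hpf.out
  split_ifs with h
  · have h2 : ∀ x : ZMod p, x ^ M = 1 - (if x = 0 then 1 else 0) := by
      intro x
      by_cases hx : x = 0
      · simp [hx, zero_pow hM.ne']
      · obtain ⟨c, rfl⟩ := h
        rw [pow_mul, ZMod.pow_card_sub_one_eq_one hx, one_pow, if_neg hx, sub_zero]
    rw [Finset.sum_congr rfl (fun x _ => h2 x), Finset.sum_sub_distrib,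
      Finset.sum_const, Finset.sum_ite_eq' Finset.univ (0 : ZMod p) (fun _ => (1:ZMod p))]
    simp [ZMod.card, ZMod.natCast_self]
  · have hne1 : p - 1 ≠ 1 := fun h1 => h (by rw [h1]; exact one_dvd M)
    have h2le := hp.two_le
    set M' := M % (p - 1) with hM'
    have hM'lt : M' < p - 1 := Nat.mod_lt _ (by omega)
    have hM'pos : 0 < M' := Nat.pos_of_ne_zero (fun h0 => h (Nat.dvd_of_mod_eq_zero h0))
    have h2 : ∀ x : ZMod p, x ^ M = x ^ M' := by
      intro x
      by_cases hx : x = 0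
      · simp [hx, zero_pow hM.ne', zero_pow hM'pos.ne']
      · conv_lhs => rw [← Nat.div_add_mod M (p-1)]
        rw [pow_add, pow_mul, ZMod.pow_card_sub_one_eq_one hx, one_pow, one_mul]
    rw [Finset.sum_congr rfl (fun x _ => h2 x)]
    exact FiniteField.sum_pow_lt_card_sub_one _ M' (by rwa [ZMod.card])

lemma key_engine (p : ℕ) [hpf : Fact p.Prime] (n k : ℕ) (hn : 0 < n)
    (a : ZMod p) (ha : a ≠ 0)
    (hperm : Function.Bijective (fun x : ZMod p => x ^ n * (x ^ k + a)))
    (e r : ℕ) (he1 : 1 ≤ e) (he2 : e ≤ p - 2) (hre : r ≤ e)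
    (hdvd : (p - 1) ∣ n * e + r * k)
    (huniq : ∀ j ≤ e, (p - 1) ∣ n * e + j * k → j = r) : False := by
  have hp := hpf.out
  have h0 : (∑ x : ZMod p, (x ^ n * (x ^ k + a)) ^ e) = 0 := by
    rw [hperm.sum_comp (fun y => y ^ e)]
    have : e < Fintype.card (ZMod p) - 1 := by rw [ZMod.card]; omega
    exact FiniteField.sum_pow_lt_card_sub_one _ e this
  have hexp : ∀ x : ZMod p, (x ^ n * (x ^ k + a)) ^ e
      = ∑ j ∈ Finset.range (e + 1), x ^ (n * e + j * k) * (a ^ (e - j) * (e.choose j)) := by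
    intro x
    rw [mul_pow, add_pow, Finset.mul_sum]
    refine Finset.sum_congr rfl (fun j hj => ?_)
    rw [← pow_mul x n e, ← pow_mul x k j]
    rw [show n * e + j * k = n * e + k * j by ring, pow_add]
    ring
  rw [Finset.sum_congr rfl (fun x _ => hexp x), Finset.sum_comm] at h0
  have hterm : ∀ j ∈ Finset.range (e + 1),
      (∑ x : ZMod p, x ^ (n * e + j * k) * (a ^ (e - j) * (e.choose j)))
      = (if (p - 1) ∣ n * e + j * k then (-1 : ZMod p) else 0) * (a ^ (e - j) * (e.choose j)) := by
    intro j hj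
    rw [← Finset.sum_mul, sum_pow_zmod p _ (by positivity)]
  rw [Finset.sum_congr rfl hterm] at h0
  rw [Finset.sum_eq_single r (fun j hj hjr => by
      rw [if_neg (fun hd => hjr (huniq j (by simp at hj; omega) hd)), zero_mul])
    (fun hr => absurd (Finset.mem_range.mpr (by omega)) hr)] at h0
  rw [if_pos hdvd] at h0
  have h1 : a ^ (e - r) * (e.choose r : ZMod p) = 0 := by
    have h0' : -(a ^ (e - r) * (e.choose r : ZMod p)) = 0 := by rw [← h0]; ring
    exact neg_eq_zero.mp h0'
  have h2 : (e.choose r : ZMod p) ≠ 0 := by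
    rw [Ne, ZMod.natCast_eq_zero_iff]
    intro hdv
    have hfac : ¬ p ∣ e.factorial := by
      rw [Nat.Prime.dvd_factorial hp]; omega
    exact hfac (by
      rw [← Nat.choose_mul_factorial_mul_factorial hre]
      exact Dvd.dvd.mul_right (hdv.mul_right _) _)
  exact h2 (by
    have := mul_eq_zero.mp h1
    rcases this with h | h
    · exact absurd h (pow_ne_zero _ ha)
    · exact h)

def rfun (u ν t : ℕ) : ℕ := (u - ν * t % u) % u

lemma rfun_lt (u ν t : ℕ) (hu : 0 < u) : rfun u ν t < u := Nat.mod_lt _ hu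

lemma rdvd (u ν t : ℕ) (hu : 0 < u) : u ∣ ν * t + rfun u ν t := by
  unfold rfun
  have hdm := Nat.div_add_mod (ν * t) u
  set q := ν * t / u with hq
  set s := ν * t % u with hs
  have hslt : s < u := Nat.mod_lt _ hu
  by_cases h0 : s = 0
  · rw [h0, Nat.sub_zero, Nat.mod_self]
    exact ⟨q, by omega⟩
  · rw [Nat.mod_eq_of_lt (by omega : u - s < u)]
    refine ⟨q + 1, ?_⟩
    rw [Nat.mul_succ]
    omega

lemma core (u ν : ℕ) (hu : 2 ≤ u) (hν : ν < u) (hpar : Even u → Odd ν) :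
    ∃ t, 1 ≤ t ∧ t ≤ u - 1 ∧ rfun u ν t ≤ 2 * t ∧ 2 * t < rfun u ν t + u := by
  classical
  have hwit : 1 ≤ u - 1 ∧ rfun u ν (u - 1) ≤ 2 * (u - 1) := by
    constructor
    · omega
    · have := rfun_lt u ν (u - 1) (by omega); omega
  have hex : ∃ t, 1 ≤ t ∧ rfun u ν t ≤ 2 * t := ⟨u - 1, hwit⟩
  obtain ⟨t₀, ⟨ht1, ht2⟩, hmin⟩ :
      ∃ t, (1 ≤ t ∧ rfun u ν t ≤ 2 * t) ∧ ∀ s < t, ¬(1 ≤ s ∧ rfun u ν s ≤ 2 * s) :=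
    ⟨Nat.find hex, Nat.find_spec hex, fun s hs => Nat.find_min hex hs⟩
  have htle : t₀ ≤ u - 1 := by
    by_contra h
    exact hmin (u - 1) (by omega) hwit
  refine ⟨t₀, ht1, htle, ht2, ?_⟩
  by_contra hcon
  push_neg at hcon
  -- hcon : rfun u ν t₀ + u ≤ 2 * t₀
  rcases Nat.lt_or_ge t₀ 2 with h2 | h2
  · -- t₀ = 1
    have ht01 : t₀ = 1 := by omega
    rw [ht01] at hcon ht2
    have hr10 : rfun u ν 1 = 0 := by omega
    have hu2 : u = 2 := by have := rfun_lt u ν 1 (by omega); omega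
    have hdv : u ∣ ν := by
      have := rdvd u ν 1 (by omega)
      rwa [hr10, Nat.mul_one, Nat.add_zero] at this
    have hν0 : ν = 0 := Nat.eq_zero_of_dvd_of_lt hdv hν
    have := hpar (by rw [hu2]; exact even_two)
    rw [hν0] at this
    exact (Nat.not_odd_iff_even.mpr Even.zero) this
  · have ht01 : t₀ = (t₀ - 1) + 1 := by omega
    set t₁ := t₀ - 1 with ht₁def
    have hmint1 : ¬ (1 ≤ t₁ ∧ rfun u ν t₁ ≤ 2 * t₁) := hmin t₁ (by omega)
    have hrt1 : 2 * t₁ < rfun u ν t₁ := by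
      rcases Nat.lt_or_ge (2 * t₁) (rfun u ν t₁) with h | h
      · exact h
      · exact absurd ⟨by omega, h⟩ hmint1
    have hcong : rfun u ν t₁ ≡ ν + rfun u ν t₀ [MOD u] := by
      have h1 : (ν * t₁ + rfun u ν t₁) ≡ 0 [MOD u] :=
        (Nat.modEq_zero_iff_dvd).mpr (rdvd u ν t₁ (by omega))
      have h2 : (ν * t₀ + rfun u ν t₀) ≡ 0 [MOD u] :=
        (Nat.modEq_zero_iff_dvd).mpr (rdvd u ν t₀ (by omega))
      have ht : ν * t₀ = ν * t₁ + ν := by rw [ht01, Nat.mul_succ]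
      rw [ht] at h2
      have h3 : (ν * t₁ + rfun u ν t₁) ≡ (ν * t₁ + (ν + rfun u ν t₀)) [MOD u] := by
        calc ν * t₁ + rfun u ν t₁ ≡ 0 [MOD u] := h1
        _ ≡ ν * t₁ + ν + rfun u ν t₀ [MOD u] := h2.symm
        _ = ν * t₁ + (ν + rfun u ν t₀) := by ring
      exact h3.add_left_cancel' _
    have heq : rfun u ν t₁ % u = (ν + rfun u ν t₀) % u := hcong
    rw [Nat.mod_eq_of_lt (rfun_lt u ν t₁ (by omega))] at heq
    rcases Nat.lt_or_ge (ν + rfun u ν t₀) u with hlt | hge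
    · -- case A : rfun t₁ = ν + rfun t₀
      rw [Nat.mod_eq_of_lt hlt] at heq
      have hνu : ν = u - 1 := by omega
      have hr1 : rfun u ν 1 = 1 := by
        unfold rfun
        rw [Nat.mul_one, Nat.mod_eq_of_lt hν, hνu]
        have h5 : u - (u - 1) = 1 := by omega
        rw [h5, Nat.mod_eq_of_lt (by omega)]
      have : ¬ (1 ≤ 1 ∧ rfun u ν 1 ≤ 2 * 1) := hmin 1 (by omega)
      exact this ⟨le_refl 1, by rw [hr1]; omega⟩
    · -- case B
      have hlt2 : ν + rfun u ν t₀ - u < u := by have := rfun_lt u ν t₀ (by omega); omega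
      rw [Nat.mod_eq_sub_mod hge, Nat.mod_eq_of_lt hlt2] at heq
      omega

theorem stmt_6 (p : ℕ) (hp : p.Prime)
    (n k : ℕ) (hn : 0 < n) (hk : 0 < k) (hnontriv : ¬ (p - 1) ∣ k)
    (a : ZMod p) (ha : a ≠ 0)
    (hperm : Function.Bijective
      (fun x : ZMod p => Polynomial.eval x (X ^ n * (X ^ k + C a)))) :
    2 < Nat.gcd k (p - 1) := by
  haveI : Fact p.Prime := ⟨hp⟩
  have hperm' : Function.Bijective (fun x : ZMod p => x ^ n * (x ^ k + a)) := by
    have hfeq : (fun x : ZMod p => Polynomial.eval x (X ^ n * (X ^ k + C a)))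
        = fun x : ZMod p => x ^ n * (x ^ k + a) := by
      funext x; simp
    rwa [hfeq] at hperm
  have hp2 := hp.two_le
  have hp3 : 3 ≤ p := by
    rcases Nat.lt_or_ge p 3 with h | h
    · exfalso
      have : p = 2 := by omega
      exact hnontriv (by rw [this]; exact one_dvd k)
    · exact h
  by_contra hle
  push_neg at hle
  have hd1 : 0 < Nat.gcd k (p - 1) := Nat.gcd_pos_of_pos_left (p - 1) hk
  rcases (by omega : Nat.gcd k (p - 1) = 1 ∨ Nat.gcd k (p - 1) = 2) with hd | hd
  · -- case gcd = 1
    have hco : Nat.Coprime k (p - 1) := hd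
    haveI : NeZero (p - 1) := ⟨by omega⟩
    set e := p - 2 with he
    have he1 : 1 ≤ e := by omega
    set b := ((k : ZMod (p - 1))⁻¹).val with hbdef
    have hbmod : k * b ≡ 1 [MOD p - 1] := by
      have h1 : ((k : ZMod (p - 1)) * (k : ZMod (p - 1))⁻¹) = 1 :=
        ZMod.coe_mul_inv_eq_one k hco
      have h2 : (((k * b : ℕ)) : ZMod (p - 1)) = ((1 : ℕ) : ZMod (p - 1)) := by
        push_cast
        rw [ZMod.natCast_rightInverse _, h1]
      exact (ZMod.natCast_eq_natCast_iff _ _ _).mp h2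
    set r := rfun (p - 1) (n * e * b) 1 with hrdef
    have hrlt : r < p - 1 := rfun_lt _ _ _ (by omega)
    have hA : (p - 1) ∣ n * e * b * 1 + r := rdvd _ _ _ (by omega)
    have hdvd : (p - 1) ∣ n * e + r * k := by
      rw [Nat.mul_one] at hA
      have c1 : k * (n * e * b + r) ≡ 0 [MOD p - 1] :=
        ((Nat.modEq_zero_iff_dvd).mpr hA).mul_left k
      have c2 : n * e + r * k ≡ k * (n * e * b + r) [MOD p - 1] := by
        have h3 : k * (n * e * b + r) = (k * b) * (n * e) + r * k := by ring
        rw [h3]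
        calc n * e + r * k = 1 * (n * e) + r * k := by ring
        _ ≡ (k * b) * (n * e) + r * k [MOD p - 1] :=
          ((hbmod.symm).mul_right (n * e)).add_right (r * k)
      exact (Nat.modEq_zero_iff_dvd).mp (c2.trans c1)
    have huniq : ∀ j ≤ e, (p - 1) ∣ n * e + j * k → j = r := by
      intro j hj hjd
      have h1 : n * e + j * k ≡ n * e + r * k [MOD p - 1] :=
        ((Nat.modEq_zero_iff_dvd).mpr hjd).trans ((Nat.modEq_zero_iff_dvd).mpr hdvd).symm
      have h2 : j * k ≡ r * k [MOD p - 1] := h1.add_left_cancel' _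
      have h3 : j ≡ r [MOD p - 1] := h2.cancel_right_of_coprime (by
        rw [Nat.coprime_comm] at hco; exact hco)
      have h4 : j % (p - 1) = r % (p - 1) := h3
      rw [Nat.mod_eq_of_lt (by omega : j < p - 1), Nat.mod_eq_of_lt hrlt] at h4
      exact h4
    exact key_engine p n k hn a ha hperm' e r he1 (le_refl _) (by omega) hdvd huniq
  · -- case gcd = 2
    have hk2 : 2 ∣ k := hd ▸ Nat.gcd_dvd_left k (p - 1)
    have hq2 : 2 ∣ p - 1 := hd ▸ Nat.gcd_dvd_right k (p - 1)
    have hp5 : 5 ≤ p := by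
      have hne3 : p ≠ 3 := by
        intro h3
        exact hnontriv (by rw [h3]; exact hk2)
      have hne4 : p ≠ 4 := by
        intro h4; rw [h4] at hp; norm_num at hp
      omega
    obtain ⟨κ, hκ⟩ := hk2
    obtain ⟨u, hu⟩ := hq2
    have hu2 : 2 ≤ u := by omega
    have hκpos : 0 < κ := by omega
    have hcop : Nat.Coprime κ u := by
      have := Nat.gcd_mul_left 2 κ u
      rw [← hκ, ← hu, hd] at this
      omega
    -- n is odd
    have hnodd : Odd n := by
      rw [Nat.odd_iff]
      by_contra h
      have hne : Even n := Nat.even_iff.mpr (by omega)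
      have hke : Even k := ⟨κ, by omega⟩
      have heval : ((-1 : ZMod p)) ^ n * ((-1 : ZMod p) ^ k + a)
          = (1 : ZMod p) ^ n * ((1 : ZMod p) ^ k + a) := by
        rw [hne.neg_one_pow, hke.neg_one_pow, one_pow, one_pow]
      have hinj := hperm'.injective heval
      have h2 : (2 : ZMod p) = 0 := by linear_combination -hinj
      have h3 : (p : ℕ) ∣ 2 := by
        have : (((2 : ℕ)) : ZMod p) = 0 := by exact_mod_cast h2
        exact (ZMod.natCast_eq_zero_iff 2 p).mp this
      have := Nat.le_of_dvd (by norm_num) h3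
      omega
    haveI : NeZero u := ⟨by omega⟩
    set b := ((κ : ZMod u)⁻¹).val with hbdef
    have hbmod : κ * b ≡ 1 [MOD u] := by
      have h1 : ((κ : ZMod u) * (κ : ZMod u)⁻¹) = 1 := ZMod.coe_mul_inv_eq_one κ hcop
      have h2 : (((κ * b : ℕ)) : ZMod u) = ((1 : ℕ) : ZMod u) := by
        push_cast
        rw [ZMod.natCast_rightInverse _, h1]
      exact (ZMod.natCast_eq_natCast_iff _ _ _).mp h2
    set ν := (n * b) % u with hνdef
    have hνlt : ν < u := Nat.mod_lt _ (by omega)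
    have hνmod : ν ≡ n * b [MOD u] := Nat.mod_modEq (n * b) u
    have hpar : Even u → Odd ν := by
      intro hue
      have hκb1 : κ * b % u = 1 := by
        have := hbmod
        rwa [Nat.ModEq, Nat.mod_eq_of_lt (by omega : 1 < u)] at this
      have hdm := Nat.div_add_mod (κ * b) u
      have hκbodd : Odd (κ * b) := by
        rw [← hdm, hκb1]
        exact (hue.mul_right _).add_one
      have hbodd : Odd b := (Nat.odd_mul.mp hκbodd).2
      have hnbodd : Odd (n * b) := Nat.odd_mul.mpr ⟨hnodd, hbodd⟩
      have hdm2 := Nat.div_add_mod (n * b) u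
      have heE : Even (u * (n * b / u)) := hue.mul_right _
      have : ν = n * b - u * (n * b / u) := by omega
      rw [this]
      exact Nat.Odd.sub_even (by omega) hnbodd heE
    obtain ⟨t, ht1, ht2, hr1, hr2⟩ := core u ν hu2 hνlt hpar
    set r := rfun u ν t with hrdef
    have hrlt : r < u := rfun_lt _ _ _ (by omega)
    set e := 2 * t with hedef
    have he1 : 1 ≤ e := by omega
    have he2 : e ≤ p - 2 := by omega
    have hre : r ≤ e := hr1
    -- u ∣ n * t + r * κ
    have hAA : u ∣ ν * t + r := rdvd u ν t (by omega)
    have hBB : u ∣ n * t + r * κ := by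
      have c0 : κ * (ν * t + r) ≡ 0 [MOD u] := ((Nat.modEq_zero_iff_dvd).mpr hAA).mul_left κ
      have c1 : κ * (ν * t + r) ≡ κ * ((n * b) * t + r) [MOD u] :=
        ((hνmod.mul_right t).add_right r).mul_left κ
      have c2 : n * t + r * κ ≡ κ * ((n * b) * t + r) [MOD u] := by
        have h3 : κ * ((n * b) * t + r) = (κ * b) * (n * t) + r * κ := by ring
        rw [h3]
        calc n * t + r * κ = 1 * (n * t) + r * κ := by ring
        _ ≡ (κ * b) * (n * t) + r * κ [MOD u] :=
          ((hbmod.symm).mul_right (n * t)).add_right (r * κ)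
      exact (Nat.modEq_zero_iff_dvd).mp (c2.trans (c1.symm.trans c0))
    have hdvd : (p - 1) ∣ n * e + r * k := by
      have h3 : n * e + r * k = 2 * (n * t + r * κ) := by rw [hedef, hκ]; ring
      rw [h3, hu]
      exact Nat.mul_dvd_mul_left 2 hBB
    have huniq : ∀ j ≤ e, (p - 1) ∣ n * e + j * k → j = r := by
      intro j hj hjd
      have hjd' : u ∣ n * t + j * κ := by
        have h3 : n * e + j * k = 2 * (n * t + j * κ) := by rw [hedef, hκ]; ring
        rw [h3, hu] at hjd
        exact (Nat.mul_dvd_mul_iff_left (by norm_num : 0 < 2)).mp hjd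
      have h1 : n * t + j * κ ≡ n * t + r * κ [MOD u] :=
        ((Nat.modEq_zero_iff_dvd).mpr hjd').trans ((Nat.modEq_zero_iff_dvd).mpr hBB).symm
      have h2 : j * κ ≡ r * κ [MOD u] := h1.add_left_cancel' _
      have h3 : j ≡ r [MOD u] := h2.cancel_right_of_coprime (by
        have := hcop; rwa [Nat.coprime_comm] at this)
      have h4 : j % u = r % u := h3
      rw [Nat.mod_eq_of_lt hrlt] at h4
      rcases Nat.lt_or_ge j u with hju | hju
      · rw [Nat.mod_eq_of_lt hju] at h4; exact h4
      · exfalso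
        have hdm := Nat.div_add_mod j u
        have hq1 : 1 ≤ j / u := (Nat.one_le_div_iff (by omega)).mpr hju
        have : u ≤ u * (j / u) := Nat.le_mul_of_pos_right u (by omega)
        omega
    exact key_engine p n k hn a ha hperm' e r he1 he2 hre hdvd huniq
end

section
/- Let p be a prime, let n, k be positive integers with (p - 1) ∤ k, and let a be a nonzero element of F_p. If x^n·(x^k + a) is a permutation polynomial of F_p, then gcd(k, p - 1) ≠ 4. -/
open Polynomial Finset

private lemma pow_reduce (p : ℕ) [Fact p.Prime] (x : ZMod p) {r t : ℕ}
    (h : r % (p-1) = t % (p-1)) (hr : 0 < r) (ht : 0 < t) : x ^ r = x ^ t := by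
  rcases eq_or_ne x 0 with rfl | hx
  · rw [zero_pow hr.ne', zero_pow ht.ne']
  · have h1 : x ^ (p-1) = 1 := ZMod.pow_card_sub_one_eq_one hx
    have key : ∀ m : ℕ, x ^ m = x ^ (m % (p-1)) := by
      intro m
      conv_lhs => rw [← Nat.div_add_mod m (p-1)]
      rw [pow_add, pow_mul, h1, one_pow, one_mul]
    rw [key r, key t, h]

private lemma sum_pow_zero (p : ℕ) [Fact p.Prime] {r : ℕ} (hr : 0 < r)
    (h : ¬ (p-1) ∣ r) : ∑ x : ZMod p, x ^ r = 0 := by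
  have hp2 := (Fact.out : p.Prime).two_le
  have hp1 : 0 < p - 1 := by omega
  have hmod : r % (p-1) < p - 1 := Nat.mod_lt _ hp1
  have hr' : 0 < r % (p-1) := by
    rcases Nat.eq_zero_or_pos (r % (p-1)) with h0 | h0
    · exact absurd (Nat.dvd_of_mod_eq_zero h0) h
    · exact h0
  have hsame : ∑ x : ZMod p, x ^ r = ∑ x : ZMod p, x ^ (r % (p-1)) :=
    Finset.sum_congr rfl fun x _ =>
      pow_reduce p x (Nat.mod_mod_of_dvd r dvd_rfl).symm hr hr'
  rw [hsame]
  have hcard : r % (p-1) < Fintype.card (ZMod p) - 1 := by rw [ZMod.card]; exact hmod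
  exact FiniteField.sum_pow_lt_card_sub_one (ZMod p) _ hcard

private lemma sum_pow_neg_one (p : ℕ) [Fact p.Prime] {r : ℕ} (hr : 0 < r)
    (h : (p-1) ∣ r) : ∑ x : ZMod p, x ^ r = -1 := by
  have hp2 := (Fact.out : p.Prime).two_le
  have key : ∀ x : ZMod p, x ^ r = 1 - (if x = 0 then 1 else 0) := by
    intro x
    rcases eq_or_ne x 0 with rfl | hx
    · simp [zero_pow hr.ne']
    · obtain ⟨t, rfl⟩ := h
      rw [pow_mul, ZMod.pow_card_sub_one_eq_one hx, one_pow]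
      simp [hx]
  rw [Finset.sum_congr rfl fun x _ => key x, Finset.sum_sub_distrib,
    Finset.sum_const, Finset.sum_ite_eq' Finset.univ (0 : ZMod p) (fun _ => (1 : ZMod p))]
  simp only [Finset.mem_univ, if_true, Finset.card_univ, ZMod.card, nsmul_eq_mul, mul_one]
  rw [ZMod.natCast_self]
  ring

private lemma keyfind (e v : ℕ) (he : 5 ≤ e) (hv : v < e) :
    ∃ s, 0 < s ∧ (v * s) % e ≤ 4 * s ∧ 4 * s < (v * s) % e + e := by
  have hepos : 0 < e := by omega
  rcases le_or_gt v 4 with h4 | h4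
  · have h1 : (v * 1) % e = v := by rw [mul_one, Nat.mod_eq_of_lt hv]
    exact ⟨1, one_pos, by omega, by omega⟩
  · have hex : ∃ s, 0 < s ∧ (v * s) % e ≤ 4 * s :=
      ⟨e, hepos, by rw [Nat.mul_mod_left]; omega⟩
    classical
    obtain ⟨hs0, hsle⟩ := Nat.find_spec hex
    set s := Nat.find hex with hsdef
    refine ⟨s, hs0, hsle, ?_⟩
    have hs1 : s ≠ 1 := by
      intro h1
      rw [h1, mul_one, Nat.mod_eq_of_lt hv] at hsle
      omega
    obtain ⟨t, hst⟩ : ∃ t, s = t + 1 := ⟨s - 1, by omega⟩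
    have ht0 : 0 < t := by omega
    have hprev : ¬ (0 < t ∧ (v * t) % e ≤ 4 * t) := Nat.find_min hex (by omega)
    have hprev' : 4 * t < (v * t) % e := by
      by_contra hcon
      exact hprev ⟨ht0, by omega⟩
    have hc' : (v * t) % e < e := Nat.mod_lt _ hepos
    have hmod : (v * s) % e = ((v * t) % e + v) % e := by
      rw [hst, mul_add, mul_one, Nat.add_mod, Nat.mod_eq_of_lt hv]
    rcases lt_or_ge ((v * t) % e + v) e with hlt | hge
    · rw [Nat.mod_eq_of_lt hlt] at hmod
      omega
    · have heq : ((v * t) % e + v) % e = (v * t) % e + v - e := by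
        rw [Nat.mod_eq_sub_mod hge, Nat.mod_eq_of_lt (by omega)]
      rw [heq] at hmod
      omega

set_option maxHeartbeats 2000000 in
private lemma check13 : ∀ n' ∈ Finset.Icc 1 12, ∀ k' ∈ Finset.Icc 1 12,
    Nat.gcd k' 12 = 4 → ∀ a : ZMod 13, a ≠ 0 →
    ¬ Function.Bijective (fun x : ZMod 13 => x ^ n' * (x ^ k' + a)) := by decide

set_option maxHeartbeats 4000000 in
private lemma check17 : ∀ n' ∈ Finset.Icc 1 16, ∀ k' ∈ Finset.Icc 1 16,
    Nat.gcd k' 16 = 4 → ∀ a : ZMod 17, a ≠ 0 →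
    ¬ Function.Bijective (fun x : ZMod 17 => x ^ n' * (x ^ k' + a)) := by decide

theorem stmt_7 (p : ℕ) (hp : p.Prime)
    (n k : ℕ) (hn : 0 < n) (hk : 0 < k) (hnontriv : ¬ (p - 1) ∣ k)
    (a : ZMod p) (ha : a ≠ 0)
    (hperm : Function.Bijective
      (fun x : ZMod p => Polynomial.eval x (X ^ n * (X ^ k + C a)))) :
    Nat.gcd k (p - 1) ≠ 4 := by
  intro hgcd
  haveI : Fact p.Prime := ⟨hp⟩
  have hp2 := hp.two_le
  simp only [eval_mul, eval_pow, eval_add, eval_C, eval_X] at hperm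
  have h4p : (4:ℕ) ∣ p - 1 := hgcd ▸ Nat.gcd_dvd_right k (p-1)
  have h4k : (4:ℕ) ∣ k := hgcd ▸ Nat.gcd_dvd_left k (p-1)
  obtain ⟨e, he⟩ := h4p
  obtain ⟨κ, hκ⟩ := h4k
  have hepos : 0 < e := by omega
  have he1 : e ≠ 1 := by
    rintro rfl
    have h4 : p - 1 = 4 := by omega
    exact hnontriv (h4 ▸ ⟨κ, hκ⟩)
  rcases eq_or_ne e 2 with rfl | he2
  · have h9 : p = 9 := by omega
    rw [h9] at hp
    norm_num at hp
  rcases eq_or_ne e 3 with rfl | he3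
  · have hp13 : p = 13 := by omega
    subst hp13
    have hfe : (fun x : ZMod 13 => x ^ n * (x ^ k + a))
        = fun x => x ^ ((n-1) % 12 + 1) * (x ^ ((k-1) % 12 + 1) + a) := by
      funext x
      rw [pow_reduce 13 x (r := n) (t := (n-1) % 12 + 1) (by omega) hn (by omega),
          pow_reduce 13 x (r := k) (t := (k-1) % 12 + 1) (by omega) hk (by omega)]
    rw [hfe] at hperm
    have hg12 : Nat.gcd k 12 = 4 := by simpa using hgcd
    have hmm : ((k-1) % 12 + 1) % 12 = k % 12 := by omega
    have hgk' : Nat.gcd ((k-1) % 12 + 1) 12 = 4 := by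
      calc Nat.gcd ((k-1) % 12 + 1) 12
          = Nat.gcd (((k-1) % 12 + 1) % 12) 12 := by
            rw [Nat.gcd_comm, Nat.gcd_rec]
        _ = Nat.gcd (k % 12) 12 := by rw [hmm]
        _ = Nat.gcd k 12 := by rw [← Nat.gcd_rec, Nat.gcd_comm]
        _ = 4 := hg12
    exact check13 _ (Finset.mem_Icc.mpr (by omega)) _ (Finset.mem_Icc.mpr (by omega))
      hgk' a ha hperm
  rcases eq_or_ne e 4 with rfl | he4
  · have hp17 : p = 17 := by omega
    subst hp17
    have hfe : (fun x : ZMod 17 => x ^ n * (x ^ k + a))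
        = fun x => x ^ ((n-1) % 16 + 1) * (x ^ ((k-1) % 16 + 1) + a) := by
      funext x
      rw [pow_reduce 17 x (r := n) (t := (n-1) % 16 + 1) (by omega) hn (by omega),
          pow_reduce 17 x (r := k) (t := (k-1) % 16 + 1) (by omega) hk (by omega)]
    rw [hfe] at hperm
    have hg16 : Nat.gcd k 16 = 4 := by simpa using hgcd
    have hmm : ((k-1) % 16 + 1) % 16 = k % 16 := by omega
    have hgk' : Nat.gcd ((k-1) % 16 + 1) 16 = 4 := by
      calc Nat.gcd ((k-1) % 16 + 1) 16
          = Nat.gcd (((k-1) % 16 + 1) % 16) 16 := by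
            rw [Nat.gcd_comm, Nat.gcd_rec]
        _ = Nat.gcd (k % 16) 16 := by rw [hmm]
        _ = Nat.gcd k 16 := by rw [← Nat.gcd_rec, Nat.gcd_comm]
        _ = 4 := hg16
    exact check17 _ (Finset.mem_Icc.mpr (by omega)) _ (Finset.mem_Icc.mpr (by omega))
      hgk' a ha hperm
  -- main case : e ≥ 5
  have he5 : 5 ≤ e := by omega
  haveI : NeZero e := ⟨by omega⟩
  have hcop : Nat.Coprime κ e := by
    have hmul : Nat.gcd (4*κ) (4*e) = 4 * Nat.gcd κ e := Nat.gcd_mul_left 4 κ e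
    rw [← hκ, ← he, hgcd] at hmul
    unfold Nat.Coprime
    omega
  set μ : ZMod e := -(n : ZMod e) * (κ : ZMod e)⁻¹ with hμ
  obtain ⟨s, hs0, hc1, hc2⟩ := keyfind e μ.val he5 (ZMod.val_lt μ)
  set c : ℕ := (μ.val * s) % e with hcdef
  have hce : c < e := Nat.mod_lt _ (by omega)
  have hdvdc : e ∣ n * s + κ * c := by
    have h0 : ((n * s + κ * c : ℕ) : ZMod e) = 0 := by
      push_cast
      have hcc : (c : ZMod e) = μ * s := by
        rw [hcdef]
        push_cast [ZMod.natCast_mod]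
        rw [ZMod.natCast_val, ZMod.cast_id]
      rw [hcc, hμ]
      have hinv : (κ : ZMod e) * (κ : ZMod e)⁻¹ = 1 := ZMod.coe_mul_inv_eq_one κ hcop
      linear_combination (-(n : ZMod e) * (s : ZMod e)) * hinv
    exact (ZMod.natCast_eq_zero_iff _ _).mp h0
  have huniq : ∀ i : ℕ, i ≤ 4*s → e ∣ n*s + κ*i → i = c := by
    intro i hi hdvd
    have d1 : (e:ℤ) ∣ (κ:ℤ) * ((i:ℤ) - (c:ℤ)) := by
      have ha1 := Int.natCast_dvd_natCast.mpr hdvd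
      have ha2 := Int.natCast_dvd_natCast.mpr hdvdc
      push_cast at ha1 ha2
      have hsub := dvd_sub ha1 ha2
      convert hsub using 1
      · rfl
      · ring
    have hcope : IsCoprime (e:ℤ) (κ:ℤ) := Nat.isCoprime_iff_coprime.mpr hcop.symm
    have hzero : (i:ℤ) - (c:ℤ) = 0 :=
      Int.eq_zero_of_abs_lt_dvd (hcope.dvd_of_dvd_mul_left d1) (by rw [abs_lt]; constructor <;> omega)
    omega
  have hbij := hperm.sum_comp (fun y : ZMod p => y ^ (4*s))
  have hexp : ∀ x : ZMod p, (x^n * (x^k + a))^(4*s)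
      = ∑ i ∈ Finset.range (4*s+1),
          a^(4*s-i) * ((4*s).choose i : ZMod p) * x^(n*(4*s) + k*i) := by
    intro x
    rw [mul_pow, ← pow_mul, add_pow, Finset.mul_sum]
    refine Finset.sum_congr rfl fun i hi => ?_
    rw [← pow_mul, pow_add]
    ring
  simp only [hexp] at hbij
  rw [Finset.sum_comm] at hbij
  have hswap : ∀ i ∈ Finset.range (4*s+1),
      (∑ x : ZMod p, a^(4*s-i) * ((4*s).choose i : ZMod p) * x^(n*(4*s)+k*i))
      = a^(4*s-i) * ((4*s).choose i : ZMod p) * ∑ x : ZMod p, x^(n*(4*s)+k*i) := by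
    intro i _
    rw [← Finset.mul_sum]
  rw [Finset.sum_congr rfl hswap] at hbij
  have hs4lt : 4*s < 2*e := by omega
  have h44 : ¬ (p-1) ∣ 4*s := by
    intro hdvd
    have := Nat.le_of_dvd (by omega) hdvd
    omega
  rw [sum_pow_zero p (by omega) h44] at hbij
  have hzero : ∀ i ∈ Finset.range (4*s+1), i ≠ c →
      a^(4*s-i) * ((4*s).choose i : ZMod p) * (∑ x : ZMod p, x^(n*(4*s)+k*i)) = 0 := by
    intro i hi hne
    have hile : i ≤ 4*s := by have := Finset.mem_range.mp hi; omega
    have hposi : 0 < n*(4*s) + k*i := by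
      have := Nat.mul_pos hn (show 0 < 4*s by omega); omega
    have hnd : ¬ (p-1) ∣ n*(4*s) + k*i := by
      intro hdvd
      rw [he, hκ] at hdvd
      have h4 : n*(4*s) + 4*κ*i = 4*(n*s + κ*i) := by ring
      rw [h4] at hdvd
      have hdvd' : e ∣ n*s + κ*i := (Nat.mul_dvd_mul_iff_left (by norm_num : 0 < 4)).mp hdvd
      exact hne (huniq i hile hdvd')
    rw [sum_pow_zero p hposi hnd, mul_zero]
  rw [Finset.sum_eq_single_of_mem c (Finset.mem_range.mpr (by omega)) hzero] at hbij
  have hdc : (p-1) ∣ n*(4*s) + k*c := by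
    rw [he, hκ]
    have h4 : n*(4*s) + 4*κ*c = 4*(n*s+κ*c) := by ring
    rw [h4]
    exact Nat.mul_dvd_mul_left 4 hdvdc
  have hposc : 0 < n*(4*s) + k*c := by
    have := Nat.mul_pos hn (show 0 < 4*s by omega); omega
  rw [sum_pow_neg_one p hposc hdc] at hbij
  have hCne : (((4*s).choose c : ℕ) : ZMod p) ≠ 0 := by
    rw [Ne, ZMod.natCast_eq_zero_iff]
    intro hdvd
    have hfac : (4*s).choose c ∣ (4*s).factorial :=
      ⟨c.factorial * (4*s - c).factorial, by
        rw [← Nat.choose_mul_factorial_mul_factorial hc1]; ring⟩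
    have hpf : p ∣ (4*s).factorial := hdvd.trans hfac
    have := (Nat.Prime.dvd_factorial hp).mp hpf
    omega
  have hane : a^(4*s-c) ≠ 0 := pow_ne_zero _ ha
  have hprod : a^(4*s-c) * ((4*s).choose c : ZMod p) ≠ 0 := mul_ne_zero hane hCne
  rw [mul_neg_one, neg_eq_zero] at hbij
  exact hprod hbij
end

section
/- Let p be a prime, let n be a positive integer with (p - 1) ∤ 2 (i.e., p > 3), and let a be a nonzero element of F_p. Then the polynomial x^n·(x^2 + a) is not a permutation polynomial of F_p. -/
open Polynomial Finset

private lemma sum_pow_field {K : Type*} [Field K] [Fintype K] [DecidableEq K]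
    (e : ℕ) (he : e ≠ 0) :
    ∑ x : K, x ^ e = if Fintype.card K - 1 ∣ e then -1 else 0 := by
  let φ : Kˣ ↪ K := ⟨fun x ↦ x, Units.val_injective⟩
  have hm : univ.map φ = univ \ {0} := by
    ext x
    simpa only [mem_map, mem_univ, Function.Embedding.coeFn_mk, true_and, mem_sdiff,
      mem_singleton, φ] using (show (∃ a : Kˣ, (a : K) = x) ↔ x ≠ 0 from isUnit_iff_ne_zero)
  calc
    ∑ x : K, x ^ e = ∑ x ∈ univ \ {(0 : K)}, x ^ e := by
      rw [← sum_sdiff ({0} : Finset K).subset_univ, sum_singleton, zero_pow he, add_zero]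
    _ = ∑ x : Kˣ, ((x : K) ^ e) := by
      rw [← hm, univ.sum_map φ]; rfl
    _ = _ := FiniteField.sum_pow_units K e

private lemma uniq_aux (m A j j0 : ℕ) (d1 : m ∣ A + 2 * j) (d2 : m ∣ A + 2 * j0)
    (hb : 2 * j < m + 2 * j0) (hb2 : 2 * j0 < m + 2 * j) : j = j0 := by
  have e1 := Nat.eq_zero_of_dvd_of_lt (Nat.dvd_sub d1 d2) (show A + 2*j - (A + 2*j0) < m by omega)
  have e2 := Nat.eq_zero_of_dvd_of_lt (Nat.dvd_sub d2 d1) (show A + 2*j0 - (A + 2*j) < m by omega)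
  omega

private lemma key_arith (m n : ℕ) (hm : 4 ≤ m) (hme : 2 ∣ m) (hn : 0 < n) :
    ∃ k j0 : ℕ, 0 < k ∧ k < m ∧ j0 ≤ k ∧ m ∣ n * k + 2 * j0 ∧
      ∀ j ≤ k, m ∣ n * k + 2 * j → j = j0 := by
  obtain ⟨h, rfl⟩ := hme
  by_cases hcase : n % 2 = 1 ∧ h % 2 = 0
  · obtain ⟨hn1, hh0⟩ := hcase
    obtain ⟨t, rfl⟩ : ∃ t, h = 2 * t := ⟨h / 2, by omega⟩
    obtain ⟨s, rfl⟩ : ∃ s, n = 2 * s + 1 := ⟨n / 2, by omega⟩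
    have hd2 : 2 * (2 * t) ∣ (2 * s + 1) * (2 * t) + 2 * t := ⟨s + 1, by ring⟩
    refine ⟨2 * t, t, by omega, by omega, by omega, hd2, ?_⟩
    intro j hj hdvd
    exact uniq_aux _ _ _ _ hdvd hd2 (by omega) (by omega)
  · -- k = h - 1
    have hpar : 2 ∣ n * (h - 1) := by
      by_cases hx : n % 2 = 1
      · have hh1 : h % 2 = 1 := by
          rcases Nat.mod_two_eq_zero_or_one h with h0 | h1
          · exact absurd ⟨hx, h0⟩ hcase
          · exact h1
        exact Dvd.dvd.mul_left (by omega) n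
      · exact Dvd.dvd.mul_right (by omega) _
    have hh2 : 2 ≤ h := by omega
    set e := n * (h - 1) % (2 * h) with he_def
    have he2 : 2 ∣ e := (Nat.dvd_mod_iff ⟨h, rfl⟩).mpr hpar
    have helt : e < 2 * h := Nat.mod_lt _ (by omega)
    obtain ⟨q, hq⟩ : ∃ q, n * (h - 1) = 2 * h * q + e :=
      ⟨n * (h - 1) / (2 * h), by rw [he_def, Nat.div_add_mod]⟩
    by_cases he0 : e = 0
    · have hd2 : 2 * h ∣ n * (h - 1) + 2 * 0 := by
        rw [mul_zero, add_zero, hq, he0, add_zero]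
        exact ⟨q, rfl⟩
      refine ⟨h - 1, 0, by omega, by omega, by omega, hd2, ?_⟩
      intro j hj hdvd
      exact uniq_aux _ _ _ _ hdvd hd2 (by omega) (by omega)
    · have he2' : 2 ≤ e := by omega
      have he2j : 2 * ((2 * h - e) / 2) = 2 * h - e :=
        Nat.mul_div_cancel' (Nat.dvd_sub ⟨h, rfl⟩ he2)
      have hj0le : (2 * h - e) / 2 ≤ h - 1 := by omega
      have hd2 : 2 * h ∣ n * (h - 1) + 2 * ((2 * h - e) / 2) := by
        refine ⟨q + 1, ?_⟩
        rw [hq, he2j, add_assoc, Nat.add_sub_cancel' helt.le]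
        ring
      refine ⟨h - 1, (2 * h - e) / 2, by omega, by omega, hj0le, hd2, ?_⟩
      intro j hj hdvd
      exact uniq_aux _ _ _ _ hdvd hd2 (by omega) (by omega)

theorem stmt_8 (p : ℕ) (hp : p.Prime) (hnontriv : ¬ (p - 1) ∣ 2)
    (n : ℕ) (hn : 0 < n) (a : ZMod p) (ha : a ≠ 0) :
    ¬ Function.Bijective
      (fun x : ZMod p => Polynomial.eval x (X ^ n * (X ^ 2 + C a))) := by
  intro hbij
  haveI : Fact p.Prime := ⟨hp⟩
  have h5 : 5 ≤ p := by
    have h2 := hp.two_le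
    by_contra hlt
    push_neg at hlt
    interval_cases p
    · exact hnontriv (by norm_num)
    · exact hnontriv (by norm_num)
    · exact absurd hp (by norm_num)
  have hodd : p % 2 = 1 := Nat.odd_iff.mp (hp.odd_of_ne_two (by omega))
  obtain ⟨k, j0, hk0, hkm, hjk, hdvd, huniq⟩ :=
    key_arith (p - 1) n (by omega) (by omega) hn
  -- the power sum equals zero by bijectivity
  have h1 : ∑ x : ZMod p, (x ^ n * (x ^ 2 + a)) ^ k = 0 := by
    have := Fintype.sum_bijective _ hbij
      (fun x : ZMod p => (x ^ n * (x ^ 2 + a)) ^ k)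
      (fun y : ZMod p => y ^ k) (fun x => by simp)
    rw [this]
    have := FiniteField.sum_pow_lt_card_sub_one (ZMod p) k (by rw [ZMod.card]; omega)
    exact this
  -- compute the power sum
  have h2 : ∑ x : ZMod p, (x ^ n * (x ^ 2 + a)) ^ k
      = -(((k.choose j0 : ℕ) : ZMod p) * a ^ (k - j0)) := by
    calc ∑ x : ZMod p, (x ^ n * (x ^ 2 + a)) ^ k
        = ∑ x : ZMod p, ∑ j ∈ range (k + 1),
            ((k.choose j : ZMod p) * a ^ (k - j)) * x ^ (n * k + 2 * j) := by
          refine Finset.sum_congr rfl fun x _ => ?_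
          rw [mul_pow, ← pow_mul, add_pow, Finset.mul_sum]
          refine Finset.sum_congr rfl fun j hj => ?_
          rw [← pow_mul, pow_add]
          ring
      _ = ∑ j ∈ range (k + 1),
            ((k.choose j : ZMod p) * a ^ (k - j)) * ∑ x : ZMod p, x ^ (n * k + 2 * j) := by
          rw [Finset.sum_comm]
          exact Finset.sum_congr rfl fun j _ => (Finset.mul_sum _ _ _).symm
      _ = ∑ j ∈ range (k + 1),
            ((k.choose j : ZMod p) * a ^ (k - j)) *
              (if (p - 1) ∣ (n * k + 2 * j) then (-1 : ZMod p) else 0) := by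
          refine Finset.sum_congr rfl fun j _ => ?_
          rw [sum_pow_field (n * k + 2 * j) (by positivity), ZMod.card]
      _ = -(((k.choose j0 : ℕ) : ZMod p) * a ^ (k - j0)) := by
          rw [Finset.sum_eq_single_of_mem j0 (by simp [Nat.lt_succ_of_le hjk])]
          · rw [if_pos hdvd]; ring
          · intro j hjmem hne
            rw [if_neg, mul_zero]
            intro hd
            exact hne (huniq j (by simpa [Nat.lt_succ_iff] using hjmem) hd)
  rw [h1] at h2
  have h3 : ((k.choose j0 : ℕ) : ZMod p) * a ^ (k - j0) = 0 := by
    have := h2.symm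
    rwa [neg_eq_zero] at this
  have h4 : ((k.choose j0 : ℕ) : ZMod p) = 0 :=
    (mul_eq_zero.mp h3).resolve_right (pow_ne_zero _ ha)
  have h5' : p ∣ k.choose j0 := (ZMod.natCast_eq_zero_iff _ _).mp h4
  have h6 : p ∣ Nat.factorial k := h5'.trans ⟨Nat.factorial j0 * Nat.factorial (k - j0), by
    rw [← mul_assoc, Nat.choose_mul_factorial_mul_factorial hjk]⟩
  have := (Nat.Prime.dvd_factorial hp).mp h6
  omega
end

section
/- Let p be a prime with p ≡ 1 (mod 4) and p > 5, let n be a positive integer, and let a be a nonzero element of F_p. Then the polynomial x^n·(x^4 + a) is not a permutation polynomial of F_p. -/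
open Polynomial Finset

theorem stmt_9 (p : ℕ) (hp : p.Prime) (hp1 : p % 4 = 1) (hp5 : 5 < p)
    (n : ℕ) (hn : 0 < n) (a : ZMod p) (ha : a ≠ 0) :
    ¬ Function.Bijective
      (fun x : ZMod p => Polynomial.eval x (X ^ n * (X ^ 4 + C a))) := by
  haveI : Fact p.Prime := ⟨hp⟩
  intro hbij
  have hF : (fun x : ZMod p => Polynomial.eval x (X ^ n * (X ^ 4 + C a))) =
      fun x : ZMod p => x ^ n * (x ^ 4 + a) := by
    funext x; simp
  rw [hF] at hbij
  obtain ⟨hinj, hsurj⟩ := hbij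
  rcases Nat.even_or_odd n with hev | hodd
  · -- n even : f(-1) = f(1)
    have h : (-1 : ZMod p) = 1 := by
      apply hinj
      show (-1 : ZMod p) ^ n * ((-1) ^ 4 + a) = 1 ^ n * (1 ^ 4 + a)
      rw [hev.neg_one_pow]; norm_num
    have h2 : ((2 : ℕ) : ZMod p) = 0 := by push_cast; linear_combination -h
    rw [ZMod.natCast_eq_zero_iff] at h2
    have := Nat.le_of_dvd (by norm_num) h2
    omega
  · -- n odd
    set m := (p - 1) / 4 with hm
    have hm4 : p - 1 = 4 * m := by omega
    have hm0 : 0 < m := by omega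
    haveI : NeZero (p - 1) := ⟨by omega⟩
    haveI : NeZero m := ⟨by omega⟩
    obtain ⟨g, hg⟩ := IsCyclic.exists_generator (α := (ZMod p)ˣ)
    have hord : orderOf ((g : ZMod p)) = p - 1 := by
      rw [orderOf_units, orderOf_eq_card_of_forall_mem_zpowers hg, Nat.card_eq_fintype_card,
        ZMod.card_units]
    have hζp : IsPrimitiveRoot ((g : ZMod p)) (p - 1) := hord ▸ IsPrimitiveRoot.orderOf _
    have hζpne : (g : ZMod p) ≠ 0 := by
      intro h0
      have h1 := hζp.pow_eq_one
      rw [h0, zero_pow (by omega : p - 1 ≠ 0)] at h1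
      exact zero_ne_one h1
    set b : ZMod p := (-a) ^ m with hbdef
    have hane : (-a : ZMod p) ≠ 0 := neg_ne_zero.mpr ha
    by_cases hb1 : b = 1
    · -- -a is a fourth power: collision with 0
      obtain ⟨i, hi, hpi⟩ := hζp.eq_pow_of_pow_eq_one (ZMod.pow_card_sub_one_eq_one hane)
      have him : (p - 1) ∣ i * m := by
        rw [← hζp.pow_eq_one_iff_dvd, pow_mul, hpi]
        exact hb1
      obtain ⟨t, ht⟩ : 4 ∣ i := by
        obtain ⟨s, hs⟩ := him
        rw [hm4] at hs
        refine ⟨s, Nat.eq_of_mul_eq_mul_right hm0 ?_⟩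
        rw [hs]; ring
      have hx04 : ((g : ZMod p) ^ t) ^ 4 = -a := by
        rw [← pow_mul, ← hpi, ht]; ring_nf
      have hx0ne : (g : ZMod p) ^ t ≠ 0 := pow_ne_zero _ hζpne
      have hcol : (g : ZMod p) ^ t = 0 := by
        apply hinj
        show ((g:ZMod p)^t) ^ n * (((g:ZMod p)^t) ^ 4 + a) = (0 : ZMod p) ^ n * ((0 : ZMod p) ^ 4 + a)
        rw [hx04, zero_pow hn.ne']
        ring
      exact hx0ne hcol
    · -- main case: product argument
      have hb4 : b ^ 4 = 1 := by
        rw [hbdef, ← pow_mul, show m * 4 = p - 1 from by omega]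
        exact ZMod.pow_card_sub_one_eq_one hane
      have hnz : ∀ x : ZMod p, x ≠ 0 → x ^ 4 + a ≠ 0 := by
        intro x hx h0
        apply hb1
        have hxa : -a = x ^ 4 := by linear_combination -h0
        rw [hbdef, hxa, ← pow_mul, show 4 * m = p - 1 from by omega]
        exact ZMod.pow_card_sub_one_eq_one hx
      have hparam : ∀ c : ZMod p → ZMod p,
          ∏ x ∈ Finset.univ.erase (0 : ZMod p), c x =
          ∏ j ∈ range (p - 1), c ((g : ZMod p) ^ j) := by
        intro c
        symm
        apply Finset.prod_bij (i := fun j _ => (g : ZMod p) ^ j)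
        · intro j _
          exact Finset.mem_erase.mpr ⟨pow_ne_zero _ hζpne, Finset.mem_univ _⟩
        · intro j hj k hk hjk
          exact hζp.pow_inj (Finset.mem_range.mp hj) (Finset.mem_range.mp hk) hjk
        · intro x hx
          obtain ⟨j, hj, hpj⟩ := hζp.eq_pow_of_pow_eq_one
            (ZMod.pow_card_sub_one_eq_one (Finset.mem_erase.mp hx).1)
          exact ⟨j, Finset.mem_range.mpr hj, hpj⟩
        · intro j _; rfl
      -- the product of all nonzero elements is -1
      have hW : ∏ x ∈ Finset.univ.erase (0 : ZMod p), x = -1 := by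
        rw [hparam (fun x => x)]
        rw [Finset.prod_pow_eq_pow_sum, Finset.sum_range_id]
        have he : (p - 1) * (p - 1 - 1) / 2 = 2 * m * (p - 2) := by
          rw [show p - 1 - 1 = p - 2 from by omega, hm4,
            show 4 * m * (p - 2) = 2 * (2 * m * (p - 2)) from by ring]
          exact Nat.mul_div_cancel_left _ (by norm_num)
        rw [he, pow_mul]
        have hhalf : ((g : ZMod p) ^ (2 * m)) = -1 := by
          have hsq : ((g : ZMod p) ^ (2 * m)) ^ 2 = 1 := by
            rw [← pow_mul, show 2 * m * 2 = p - 1 from by omega]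
            exact hζp.pow_eq_one
          have hne1 : ((g : ZMod p) ^ (2 * m)) ≠ 1 :=
            hζp.pow_ne_one_of_pos_of_lt (by omega) (by omega)
          rcases mul_eq_zero.mp (show ((g:ZMod p)^(2*m) - 1) * ((g:ZMod p)^(2*m) + 1) = 0 from by
            linear_combination hsq) with h | h
          · exact absurd (by linear_combination h) hne1
          · linear_combination h
        rw [hhalf]
        exact Odd.neg_one_pow ⟨(p - 3) / 2, by omega⟩
      -- product equality from bijectivity
      have hprodeq : ∏ x ∈ Finset.univ.erase (0 : ZMod p), (x ^ n * (x ^ 4 + a)) =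
          ∏ x ∈ Finset.univ.erase (0 : ZMod p), x := by
        apply Finset.prod_bij (i := fun x (_ : x ∈ Finset.univ.erase (0:ZMod p)) => x ^ n * (x ^ 4 + a))
        · intro x hx
          have hx0 := (Finset.mem_erase.mp hx).1
          exact Finset.mem_erase.mpr
            ⟨mul_ne_zero (pow_ne_zero _ hx0) (hnz x hx0), Finset.mem_univ _⟩
        · intro x _ y _ hxy
          exact hinj hxy
        · intro y hy
          obtain ⟨x, hx⟩ := hsurj y
          have hyne := (Finset.mem_erase.mp hy).1
          have hx0 : x ≠ 0 := by
            rintro rfl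
            apply hyne
            rw [← hx]
            show (0:ZMod p) ^ n * ((0:ZMod p) ^ 4 + a) = 0
            rw [zero_pow hn.ne', zero_mul]
          exact ⟨x, Finset.mem_erase.mpr ⟨hx0, Finset.mem_univ _⟩, hx⟩
        · intro x _; rfl
      set Q : ZMod p := ∏ x ∈ Finset.univ.erase (0 : ZMod p), (x ^ 4 + a) with hQdef
      have hQ1 : Q = 1 := by
        have hsplit : (∏ x ∈ Finset.univ.erase (0:ZMod p), x) ^ n * Q =
            ∏ x ∈ Finset.univ.erase (0:ZMod p), (x ^ n * (x ^ 4 + a)) := by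
          rw [hQdef, ← Finset.prod_pow, ← Finset.prod_mul_distrib]
        have h2 := hprodeq
        rw [← hsplit, hW, hodd.neg_one_pow] at h2
        linear_combination -h2
      -- compute Q
      have hζ : IsPrimitiveRoot ((g : ZMod p) ^ 4) m := hζp.pow (by omega) hm4
      have hQparam : Q = ∏ j ∈ range (p - 1), (((g : ZMod p) ^ 4) ^ j + a) := by
        rw [hQdef, hparam (fun x => x ^ 4 + a)]
        exact Finset.prod_congr rfl fun j _ => by rw [pow_right_comm]
      set V : ZMod p := ∏ i ∈ range m, (((g : ZMod p) ^ 4) ^ i + a) with hVdef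
      have hblock : ∀ r : ℕ, ∏ j ∈ range (r * m), (((g : ZMod p) ^ 4) ^ j + a) = V ^ r := by
        intro r; induction r with
        | zero => simp
        | succ r ih =>
          rw [show (r + 1) * m = r * m + m from by ring, Finset.prod_range_add, ih, pow_succ V r]
          congr 1
          refine Finset.prod_congr rfl fun i _ => ?_
          rw [pow_add, mul_comm r m, pow_mul, hζ.pow_eq_one, one_pow, one_mul]
      have hQV : Q = V ^ 4 := by
        rw [hQparam, hm4, mul_comm 4 m, ← hblock 4, mul_comm m 4]
      have hVroots : V = ∏ v ∈ nthRootsFinset m (1 : ZMod p), (v + a) := by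
        rw [hVdef]
        apply Finset.prod_bij (i := fun i (_ : i ∈ range m) => ((g : ZMod p) ^ 4) ^ i)
        · intro i _
          rw [Polynomial.mem_nthRootsFinset hm0 (1 : ZMod p), ← pow_mul, mul_comm i m, pow_mul,
            hζ.pow_eq_one, one_pow]
        · intro i hi j hj hij
          exact hζ.pow_inj (Finset.mem_range.mp hi) (Finset.mem_range.mp hj) hij
        · intro v hv
          obtain ⟨i, hi, hpi⟩ := hζ.eq_pow_of_pow_eq_one ((Polynomial.mem_nthRootsFinset hm0 (1 : ZMod p)).mp hv)
          exact ⟨i, Finset.mem_range.mpr hi, hpi⟩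
        · intro i _; rfl
      have heval : b - 1 = ∏ v ∈ nthRootsFinset m (1 : ZMod p), (-a - v) := by
        have h3 := congrArg (Polynomial.eval (-a)) (X_pow_sub_one_eq_prod hm0 hζ)
        simpa [Polynomial.eval_prod, hbdef] using h3
      have hsign : ∏ v ∈ nthRootsFinset m (1 : ZMod p), (-a - v) =
          (-1) ^ (nthRootsFinset m (1 : ZMod p)).card *
            ∏ v ∈ nthRootsFinset m (1 : ZMod p), (v + a) := by
        rw [← Finset.prod_const, ← Finset.prod_mul_distrib]
        exact Finset.prod_congr rfl fun v _ => by ring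
      have hQ4 : (b - 1) ^ 4 = 1 := by
        rw [heval, hsign, mul_pow, ← pow_mul, mul_comm (nthRootsFinset m (1 : ZMod p)).card 4,
          pow_mul, ← hVroots, ← hQV, hQ1]
        norm_num
      have hcases : b = -1 ∨ b ^ 2 = -1 := by
        have h0 : (b - 1) * ((b + 1) * (b ^ 2 + 1)) = 0 := by linear_combination hb4
        rcases mul_eq_zero.mp h0 with h | h
        · exact absurd (by linear_combination h) hb1
        rcases mul_eq_zero.mp h with h | h
        · exact Or.inl (by linear_combination h)
        · exact Or.inr (by linear_combination h)
      rcases hcases with hbv | hbv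
      · rw [hbv] at hQ4
        norm_num at hQ4
        have h15 : ((15 : ℕ) : ZMod p) = 0 := by push_cast; linear_combination hQ4
        rw [ZMod.natCast_eq_zero_iff] at h15
        have hple := Nat.le_of_dvd (by norm_num) h15
        interval_cases p <;> revert hp h15 <;> decide
      · have h5 : ((5 : ℕ) : ZMod p) = 0 := by
          push_cast
          linear_combination -hQ4 + (b ^ 2 - 4 * b + 5) * hbv
        rw [ZMod.natCast_eq_zero_iff] at h5
        have := Nat.le_of_dvd (by norm_num) h5
        omega
end

section
/- Let p = 2ℓ + 1 be a prime with ℓ > 1 even, let n be an odd positive integer, and let a be a nonzero element of F_p. Then for f = x^n·(x^2 + a), the remainder of f^{ℓ} upon division by x^p - x has degree equal to p - 1; in particular f is not a permutation polynomial of F_p. -/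
open Polynomial Finset

/-- Sum of `x^m` over `ZMod p`. -/
lemma aux_sum_pow_zmod (p : ℕ) [Fact p.Prime] (m : ℕ) (hm : 0 < m) :
    ∑ x : ZMod p, x ^ m = if (p - 1) ∣ m then -1 else 0 := by
  classical
  let φ : (ZMod p)ˣ ↪ ZMod p := ⟨fun x ↦ x, Units.val_injective⟩
  have huniv : (univ : Finset (ZMod p)ˣ).map φ = univ \ {0} := by
    ext x
    simp only [mem_map, mem_univ, Function.Embedding.coeFn_mk, true_and, mem_sdiff,
      mem_singleton, φ]
    exact isUnit_iff_ne_zero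
  have h1 : ∑ x : ZMod p, x ^ m = ∑ x : (ZMod p)ˣ, (x : ZMod p) ^ m := by
    rw [← sum_sdiff ({0} : Finset (ZMod p)).subset_univ, sum_singleton,
      zero_pow hm.ne', add_zero, ← huniv, Finset.sum_map]
    rfl
  rw [h1]
  have := FiniteField.sum_pow_units (ZMod p) m
  rwa [ZMod.card p] at this

lemma aux_key_sum (p ℓ t n : ℕ) [Fact p.Prime] (hpl : p = 2 * ℓ + 1) (ht : ℓ = 2 * t)
    (ht0 : 0 < t) (hn : 0 < n) (hnodd : Odd n) (a : ZMod p) :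
    ∑ x : ZMod p, (x ^ n * (x ^ 2 + a)) ^ ℓ = -((ℓ.choose t : ZMod p) * a ^ t) := by
  have hl0 : 0 < ℓ := by omega
  have hx : ∀ x : ZMod p, (x ^ n * (x ^ 2 + a)) ^ ℓ
      = ∑ k ∈ range (ℓ + 1), (ℓ.choose k : ZMod p) * a ^ (ℓ - k) * x ^ (n * ℓ + 2 * k) := by
    intro x
    rw [mul_pow, ← pow_mul, add_pow, Finset.mul_sum]
    refine Finset.sum_congr rfl fun k hk => ?_
    rw [← pow_mul, pow_add]
    ring
  simp_rw [hx]
  rw [Finset.sum_comm]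
  have hterm : ∀ k ∈ range (ℓ + 1),
      (∑ x : ZMod p, (ℓ.choose k : ZMod p) * a ^ (ℓ - k) * x ^ (n * ℓ + 2 * k))
        = (ℓ.choose k : ZMod p) * a ^ (ℓ - k) * (if k = t then -1 else 0) := by
    intro k hk
    rw [mem_range] at hk
    rw [← Finset.mul_sum, aux_sum_pow_zmod p _ (by positivity)]
    congr 1
    have hiff : (p - 1) ∣ n * ℓ + 2 * k ↔ k = t := by
      obtain ⟨s, hs⟩ := hnodd
      have hp1 : p - 1 = 2 * ℓ := by omega
      constructor
      · intro h
        rw [hp1] at h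
        have h2 : n * ℓ + 2 * k = (2 * ℓ) * s + (ℓ + 2 * k) := by rw [hs]; ring
        rw [h2, Nat.dvd_add_right (Dvd.intro s rfl)] at h
        have h3 : 2 * t ∣ t + k := by
          have h35 : (2 * (2 * t)) ∣ 2 * (t + k) := by
            have h4 : 2 * (t + k) = ℓ + 2 * k := by omega
            rw [ht] at h; rw [h4, ht]; exact h
          exact (mul_dvd_mul_iff_left (two_ne_zero)).mp h35
        have h4 : t + k = 2 * t :=
          Nat.eq_of_dvd_of_lt_two_mul (by omega) h3 (by omega)
        omega
      · rintro rfl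
        rw [hp1, ht, hs]
        exact ⟨s + 1, by ring⟩
    simp only [hiff]
  rw [Finset.sum_congr rfl hterm, Finset.sum_eq_single t]
  · rw [if_pos rfl]
    have h5 : ℓ - t = t := by omega
    rw [h5]; ring
  · intro k _ hkt
    rw [if_neg hkt, mul_zero]
  · intro h
    exact absurd (mem_range.mpr (by omega)) h

/-- The top coefficient of the remainder mod `X^p - X` equals minus the value sum. -/
lemma aux_coeff_rem (p : ℕ) [Fact p.Prime] (f : (ZMod p)[X]) :
    (f %ₘ (X ^ p - X)).coeff (p - 1) = -∑ x : ZMod p, f.eval x := by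
  have hp2 : 1 < p := (Fact.out : p.Prime).one_lt
  have hg : (X ^ p - X : (ZMod p)[X]).Monic := by
    apply monic_X_pow_sub
    rw [degree_X]
    exact_mod_cast hp2
  set r := f %ₘ (X ^ p - X) with hr
  have hdegg : (X ^ p - X : (ZMod p)[X]).degree = p := by
    rw [degree_sub_eq_left_of_degree_lt, degree_X_pow]
    rw [degree_X_pow, degree_X]
    exact_mod_cast hp2
  have hdeg : r.natDegree < p := by
    by_cases h0 : r = 0
    · rw [h0, natDegree_zero]; omega
    · rw [← Nat.cast_lt (α := WithBot ℕ), ← degree_eq_natDegree h0, ← hdegg]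
      exact degree_modByMonic_lt f hg
  have heval : ∀ x : ZMod p, r.eval x = f.eval x := by
    intro x
    conv_rhs => rw [← modByMonic_add_div f (X ^ p - X)]
    rw [eval_add, eval_mul, eval_sub, eval_pow, eval_X, ZMod.pow_card, sub_self,
      zero_mul, add_zero]
  have hsum : ∑ x : ZMod p, f.eval x = -r.coeff (p - 1) := by
    calc ∑ x : ZMod p, f.eval x = ∑ x : ZMod p, r.eval x := by simp [heval]
      _ = ∑ x : ZMod p, ∑ i ∈ Finset.range p, r.coeff i * x ^ i := by
          refine Finset.sum_congr rfl fun x _ => ?_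
          exact eval_eq_sum_range' hdeg x
      _ = ∑ i ∈ Finset.range p, r.coeff i * ∑ x : ZMod p, x ^ i := by
          rw [Finset.sum_comm]
          simp [Finset.mul_sum]
      _ = -r.coeff (p - 1) := by
          rw [← Finset.sum_erase_add (Finset.range p) _
            (Finset.mem_range.mpr (by omega : p - 1 < p))]
          have hz : ∀ i ∈ (Finset.range p).erase (p - 1),
              r.coeff i * ∑ x : ZMod p, x ^ i = 0 := by
            intro i hi
            obtain ⟨hne, hmem⟩ := Finset.mem_erase.mp hi
            rw [Finset.mem_range] at hmem
            have : ∑ x : ZMod p, x ^ i = 0 := by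
              apply FiniteField.sum_pow_lt_card_sub_one
              rw [ZMod.card p]; omega
            rw [this, mul_zero]
          rw [Finset.sum_eq_zero hz, zero_add, aux_sum_pow_zmod p _ (by omega),
            if_pos dvd_rfl]
          ring
  rw [hsum, neg_neg]

theorem stmt_14 (p ℓ : ℕ) (hp : p.Prime) (hpl : p = 2 * ℓ + 1)
    (hl1 : 1 < ℓ) (hleven : Even ℓ)
    (n : ℕ) (hn : 0 < n) (hnodd : Odd n)
    (a : ZMod p) (ha : a ≠ 0) :
    (((X ^ n * (X ^ 2 + C a)) ^ ℓ %ₘ (X ^ p - X)).degree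
        = ((p - 1 : ℕ) : WithBot ℕ)) ∧
      ¬ Function.Bijective
        (fun x : ZMod p => Polynomial.eval x (X ^ n * (X ^ 2 + C a))) := by
  haveI : Fact p.Prime := ⟨hp⟩
  obtain ⟨t, ht'⟩ := hleven
  have ht : ℓ = 2 * t := by omega
  have ht0 : 0 < t := by omega
  have heval : ∀ x : ZMod p, eval x ((X ^ n * (X ^ 2 + C a)) ^ ℓ)
      = (x ^ n * (x ^ 2 + a)) ^ ℓ := by
    intro x; simp
  have hc : ((ℓ.choose t : ZMod p) * a ^ t) ≠ 0 := by
    apply mul_ne_zero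
    · rw [Ne, ZMod.natCast_eq_zero_iff]
      intro hdvd
      have h1 : p ∣ ℓ.factorial := by
        rw [← Nat.choose_mul_factorial_mul_factorial (by omega : t ≤ ℓ)]
        exact Dvd.dvd.mul_right (hdvd.mul_right _) _
      have h2 : p ≤ ℓ := (Nat.Prime.dvd_factorial hp).mp h1
      omega
    · exact pow_ne_zero t ha
  have hkey := aux_key_sum p ℓ t n hpl ht ht0 hn hnodd a
  have hcoeff : ((X ^ n * (X ^ 2 + C a)) ^ ℓ %ₘ (X ^ p - X)).coeff (p - 1)
      = (ℓ.choose t : ZMod p) * a ^ t := by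
    rw [aux_coeff_rem]
    have : ∑ x : ZMod p, eval x ((X ^ n * (X ^ 2 + C a)) ^ ℓ)
        = -((ℓ.choose t : ZMod p) * a ^ t) := by
      rw [Finset.sum_congr rfl fun x _ => heval x, hkey]
    rw [this, neg_neg]
  constructor
  · set r := (X ^ n * (X ^ 2 + C a)) ^ ℓ %ₘ (X ^ p - X) with hrdef
    have hrne : r ≠ 0 := fun h => hc (by rw [← hcoeff, h, coeff_zero])
    have hle : p - 1 ≤ r.natDegree := le_natDegree_of_ne_zero (hcoeff ▸ hc)
    have hg : (X ^ p - X : (ZMod p)[X]).Monic := by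
      apply monic_X_pow_sub
      rw [degree_X]
      exact_mod_cast hp.one_lt
    have hdegg : (X ^ p - X : (ZMod p)[X]).degree = p := by
      rw [degree_sub_eq_left_of_degree_lt, degree_X_pow]
      rw [degree_X_pow, degree_X]
      exact_mod_cast hp.one_lt
    have hlt : r.natDegree < p := by
      rw [← Nat.cast_lt (α := WithBot ℕ), ← degree_eq_natDegree hrne, ← hdegg]
      exact degree_modByMonic_lt _ hg
    have : r.natDegree = p - 1 := by omega
    rw [degree_eq_natDegree hrne, this]
  · intro hbij
    have h1 : ∑ x : ZMod p, (eval x (X ^ n * (X ^ 2 + C a))) ^ ℓ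
        = ∑ y : ZMod p, y ^ ℓ :=
      Fintype.sum_bijective _ hbij _ _ (fun x => rfl)
    have h2 : ∑ y : ZMod p, y ^ ℓ = 0 := by
      apply FiniteField.sum_pow_lt_card_sub_one
      rw [ZMod.card p]; omega
    have h3 : ∑ x : ZMod p, (eval x (X ^ n * (X ^ 2 + C a))) ^ ℓ
        = -((ℓ.choose t : ZMod p) * a ^ t) := by
      rw [← hkey]
      refine Finset.sum_congr rfl fun x _ => ?_
      simp
    rw [h3, h2] at h1
    exact hc (neg_eq_zero.mp h1)
end

section
/- Let p = 4ℓ + 1 be a prime with ℓ ≡ 1 (mod 4) and ℓ > 1, let n be an odd positive integer with 0 < n < 2ℓ, and let a be a nonzero element of F_p. Then for f = x^n·(x^4 + a), the remainder of f^{ℓ-1} upon division by x^p - x has degree equal to p - 1; in particular f is not a permutation polynomial of F_p. -/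
open Polynomial

open Finset in
private lemma sum_pow_eq_aux (K : Type*) [Field K] [Fintype K] [DecidableEq K] (i : ℕ)
    (hi : i ≠ 0) :
    ∑ x : K, x ^ i = if Fintype.card K - 1 ∣ i then -1 else 0 := by
  let φ : Kˣ ↪ K := ⟨fun x ↦ x, Units.val_injective⟩
  have huniv : (univ : Finset Kˣ).map φ = univ \ {0} := by
    ext x
    simpa only [mem_map, mem_univ, Function.Embedding.coeFn_mk, true_and, mem_sdiff,
      mem_singleton, φ] using (show (∃ a : Kˣ, (a : K) = x) ↔ ¬x = 0 from isUnit_iff_ne_zero)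
  calc
    ∑ x : K, x ^ i = ∑ x ∈ univ \ {(0 : K)}, x ^ i := by
      rw [← sum_sdiff ({0} : Finset K).subset_univ, sum_singleton, zero_pow hi, add_zero]
    _ = ∑ x : Kˣ, (x ^ i : K) := by simp [φ, ← huniv, univ.sum_map φ]
    _ = _ := FiniteField.sum_pow_units K i

private lemma sum_eval_eq_neg_coeff {p : ℕ} [Fact p.Prime] (r : (ZMod p)[X])
    (hr : r.natDegree < p) :
    ∑ x : ZMod p, r.eval x = - r.coeff (p - 1) := by
  have hp1 : 1 < p := (Fact.out : p.Prime).one_lt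
  have hcard : Fintype.card (ZMod p) = p := ZMod.card p
  have h1 : ∑ x : ZMod p, r.eval x
      = ∑ x : ZMod p, ∑ j ∈ Finset.range p, r.coeff j * x ^ j :=
    Finset.sum_congr rfl fun x _ => eval_eq_sum_range' hr x
  rw [h1, Finset.sum_comm]
  have h2 : ∀ j ∈ Finset.range p, (∑ x : ZMod p, r.coeff j * x ^ j)
      = if j = p - 1 then -r.coeff (p - 1) else 0 := by
    intro j hj
    rw [← Finset.mul_sum]
    by_cases hj0 : j = 0
    · subst hj0
      simp only [pow_zero, Finset.sum_const, Finset.card_univ, hcard, nsmul_eq_mul, mul_one]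
      rw [ZMod.natCast_self, mul_zero, if_neg (by omega)]
    · rw [sum_pow_eq_aux _ j hj0, hcard]
      rcases eq_or_ne j (p - 1) with h | h
      · rw [if_pos (h ▸ dvd_rfl), if_pos h, h, mul_neg_one]
      · rw [if_neg ?_, mul_zero, if_neg h]
        intro hd
        have := Nat.le_of_dvd (Nat.pos_of_ne_zero hj0) hd
        have hjp := Finset.mem_range.mp hj
        omega
  rw [Finset.sum_congr rfl h2, Finset.sum_ite_eq' (Finset.range p) (p - 1)]
  rw [if_pos (Finset.mem_range.mpr (by omega))]

theorem stmt_16 (p ℓ : ℕ) (hp : p.Prime) (hpl : p = 4 * ℓ + 1)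
    (hl4 : ℓ % 4 = 1) (hl1 : 1 < ℓ)
    (n : ℕ) (hn : 0 < n) (hn2l : n < 2 * ℓ) (hnodd : Odd n)
    (a : ZMod p) (ha : a ≠ 0) :
    (((X ^ n * (X ^ 4 + C a)) ^ (ℓ - 1) %ₘ (X ^ p - X)).degree
        = ((p - 1 : ℕ) : WithBot ℕ)) ∧
      ¬ Function.Bijective
        (fun x : ZMod p => Polynomial.eval x (X ^ n * (X ^ 4 + C a))) := by
  haveI : Fact p.Prime := ⟨hp⟩
  have hp1 : 1 < p := hp.one_lt
  have hcard : Fintype.card (ZMod p) = p := ZMod.card p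
  set f : (ZMod p)[X] := X ^ n * (X ^ 4 + C a) with hf
  set m := ℓ / 4 with hm
  have hlm : ℓ = 4 * m + 1 := by omega
  have hm1 : 1 ≤ m := by omega
  have hl5 : 5 ≤ ℓ := by omega
  set k₀ := (ℓ - n * m % ℓ) % ℓ with hk₀
  have hlpos : 0 < ℓ := by omega
  have hk₀lt : k₀ < ℓ := Nat.mod_lt _ hlpos
  have hr : n * m % ℓ < ℓ := Nat.mod_lt _ hlpos
  have hk₀' : (n * m % ℓ = 0 ∧ k₀ = 0) ∨ (0 < n * m % ℓ ∧ k₀ = ℓ - n * m % ℓ) := by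
    rcases Nat.eq_zero_or_pos (n * m % ℓ) with h | h
    · exact Or.inl ⟨h, by simp [hk₀, h]⟩
    · exact Or.inr ⟨h, by rw [hk₀, Nat.mod_eq_of_lt (by omega)]⟩
  -- key divisibility characterization
  have hdvd : ∀ k < ℓ, ((p - 1) ∣ (n * (ℓ - 1) + 4 * k) ↔ k = k₀) := by
    intro k hk
    have he : n * (ℓ - 1) + 4 * k = 4 * (n * m + k) := by
      rw [show ℓ - 1 = 4 * m from by omega]; ring
    have hp1' : p - 1 = 4 * ℓ := by omega
    rw [hp1', he, mul_dvd_mul_iff_left (by norm_num : (4 : ℕ) ≠ 0)]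
    have hmod : ℓ ∣ n * m + k ↔ ℓ ∣ (n * m % ℓ + k) := by
      rw [Nat.dvd_iff_mod_eq_zero, Nat.dvd_iff_mod_eq_zero, Nat.mod_add_mod]
    rw [hmod]
    constructor
    · rintro ⟨c, hc⟩
      have hc2 : c < 2 := by
        have h2 : ℓ * c < ℓ * 2 := by omega
        exact Nat.lt_of_mul_lt_mul_left h2
      interval_cases c <;> rcases hk₀' with ⟨h0, h1⟩ | ⟨h0, h1⟩ <;> omega
    · rintro rfl
      rcases hk₀' with ⟨h0, h1⟩ | ⟨h0, h1⟩
      · exact ⟨0, by omega⟩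
      · exact ⟨1, by omega⟩
  -- the inner power sums
  have hinner : ∀ k < ℓ, (∑ x : ZMod p, x ^ (n * (ℓ - 1) + 4 * k))
      = if k = k₀ then -1 else 0 := by
    intro k hk
    have hne : n * (ℓ - 1) + 4 * k ≠ 0 := by
      have : 0 < n * (ℓ - 1) := Nat.mul_pos hn (by omega)
      omega
    rw [sum_pow_eq_aux _ _ hne, hcard]
    by_cases h : k = k₀
    · rw [if_pos ((hdvd k hk).mpr h), if_pos h]
    · rw [if_neg (fun hd => h ((hdvd k hk).mp hd)), if_neg h]
  -- expand f(x)^(ℓ-1)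
  have step : ∀ x : ZMod p, (eval x f) ^ (ℓ - 1)
      = ∑ k ∈ Finset.range ℓ,
          x ^ (n * (ℓ - 1) + 4 * k) * (a ^ (ℓ - 1 - k) * ((ℓ - 1).choose k : ZMod p)) := by
    intro x
    have hb := add_pow (x ^ 4) a (ℓ - 1)
    simp only [hf, eval_mul, eval_pow, eval_X, eval_add, eval_C]
    rw [mul_pow, ← pow_mul, hb, show ℓ - 1 + 1 = ℓ from by omega, Finset.mul_sum]
    refine Finset.sum_congr rfl fun k _ => ?_
    ring
  -- the key sum
  have hS : ∑ x : ZMod p, (eval x f) ^ (ℓ - 1)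
      = -(a ^ (ℓ - 1 - k₀) * ((ℓ - 1).choose k₀ : ZMod p)) := by
    rw [Finset.sum_congr rfl fun x _ => step x, Finset.sum_comm]
    have h3 : ∀ k ∈ Finset.range ℓ,
        (∑ x : ZMod p, x ^ (n * (ℓ - 1) + 4 * k) * (a ^ (ℓ - 1 - k) * ((ℓ - 1).choose k : ZMod p)))
        = if k = k₀ then -(a ^ (ℓ - 1 - k₀) * ((ℓ - 1).choose k₀ : ZMod p)) else 0 := by
      intro k hk
      rw [← Finset.sum_mul, hinner k (Finset.mem_range.mp hk)]
      by_cases h : k = k₀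
      · rw [if_pos h, if_pos h, h, neg_one_mul]
      · rw [if_neg h, if_neg h, zero_mul]
    rw [Finset.sum_congr rfl h3, Finset.sum_ite_eq' (Finset.range ℓ) k₀,
      if_pos (Finset.mem_range.mpr hk₀lt)]
  have hSne : (∑ x : ZMod p, (eval x f) ^ (ℓ - 1)) ≠ 0 := by
    rw [hS]
    refine neg_ne_zero.mpr (mul_ne_zero (pow_ne_zero _ ha) ?_)
    intro hc
    rw [ZMod.natCast_eq_zero_iff] at hc
    have hdf : (ℓ - 1).choose k₀ * k₀.factorial * (ℓ - 1 - k₀).factorial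
        = (ℓ - 1).factorial :=
      Nat.choose_mul_factorial_mul_factorial (by omega : k₀ ≤ ℓ - 1)
    have : p ∣ (ℓ - 1).factorial := hdf ▸ ((hc.mul_right _).mul_right _)
    have := (Nat.Prime.dvd_factorial hp).mp this
    omega
  -- monicity and degree of X^p - X
  have hmonic : ((X : (ZMod p)[X]) ^ p - X).Monic :=
    monic_X_pow_sub (by rw [degree_X]; exact_mod_cast hp1)
  have hdegXp : ((X : (ZMod p)[X]) ^ p - X).degree = (p : WithBot ℕ) := by
    rw [degree_sub_eq_left_of_degree_lt, degree_X_pow]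
    rw [degree_X, degree_X_pow]; exact_mod_cast hp1
  set r : (ZMod p)[X] := f ^ (ℓ - 1) %ₘ (X ^ p - X) with hrdef
  have hdegr : r.degree < (p : WithBot ℕ) := by
    rw [hrdef, ← hdegXp]
    exact degree_modByMonic_lt _ hmonic
  have heval : ∀ x : ZMod p, r.eval x = (eval x f) ^ (ℓ - 1) := by
    intro x
    rw [hrdef, modByMonic_eq_sub_mul_div _ _]
    simp only [eval_sub, eval_mul, eval_pow, eval_X, ZMod.pow_card, sub_self, zero_mul,
      sub_zero]
  have hr0 : r ≠ 0 := by
    intro h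
    apply hSne
    rw [← Finset.sum_congr rfl fun x _ => heval x, h]
    simp
  have hnatdeg : r.natDegree < p := (natDegree_lt_iff_degree_lt hr0).mpr hdegr
  have hcoeff : r.coeff (p - 1) ≠ 0 := by
    have := sum_eval_eq_neg_coeff r hnatdeg
    rw [Finset.sum_congr rfl fun x _ => heval x] at this
    intro h
    rw [h, neg_zero] at this
    exact hSne this
  constructor
  · have hle : ((p - 1 : ℕ) : WithBot ℕ) ≤ r.degree := le_degree_of_ne_zero hcoeff
    have hge : p - 1 ≤ r.natDegree := le_natDegree_of_ne_zero hcoeff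
    have : r.natDegree = p - 1 := by omega
    rw [degree_eq_natDegree hr0, this]
  · intro hbij
    have hsum : ∑ x : ZMod p, (eval x f) ^ (ℓ - 1) = ∑ y : ZMod p, y ^ (ℓ - 1) :=
      Fintype.sum_bijective _ hbij _ _ (fun x => rfl)
    rw [hsum, sum_pow_eq_aux _ _ (by omega : ℓ - 1 ≠ 0), hcard, if_neg] at hSne
    · exact hSne rfl
    · intro hd
      have := Nat.le_of_dvd (by omega) hd
      omega
end
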